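/- arXiv:2009.14141 — 5 statements merged into one kernel-verified Lean document; each statement's English description precedes it below -/
import Mathlib

section
/- The chromatic symmetric function of the complete multipartite graph G_λ, expanded in augmented monomial symmetric functions, has coefficient of m̃_μ equal to the number of ordered tuples (μ^1,...,μ^k) of partitions such that μ^i ⊢ λ_i for each i and the disjoint union of the parts of the μ^i equals μ, where each tuple is counted with weight ∏_i (set partitions of a λ_i-set of type μ^i); equivalently [m̃_μ] r_λ = (∏_i λ_i!/∏_i μ_i!) · ∑_{puzzles μ→λ} 1/∏_{i,j} n_j(μ^i)!. -/
open Finset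
open scoped Classical

noncomputable section


/-- The multiset of (nonzero) exponents of a monomial. -/
def expParts (d : ℕ →₀ ℕ) : Multiset ℕ := d.support.val.map d

/-- `∏ i, n_i(m)!` where `n_i(m)` is the multiplicity of `i` in the multiset `m`. -/
def multFact (m : Multiset ℕ) : ℕ := ∏ j ∈ m.toFinset, (m.count j).factorial

/-- The augmented monomial symmetric function indexed by a multiset of positive parts. -/
def mtilde (m : Multiset ℕ) : MvPowerSeries ℕ ℚ :=
  fun d => if expParts d = m then (multFact m : ℚ) else 0

/-- The chromatic symmetric function of a finite simple graph, as a power series in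
countably many variables: the coefficient of a monomial `d` is the number of proper
colorings `κ : V → ℕ` in which color `c` is used exactly `d c` times. -/
def csf {V : Type} [Fintype V] (G : SimpleGraph V) : MvPowerSeries ℕ ℚ :=
  fun d => (Nat.card {κ : V → ℕ // (∀ v w, G.Adj v w → κ v ≠ κ w) ∧
      ∀ c, (Finset.univ.filter (fun v => κ v = c)).card = d c} : ℚ)

/-- The complete multipartite graph with stable sets of sizes given by the list `l`. -/
def multipartite (l : List ℕ) : SimpleGraph (Σ j : Fin l.length, Fin (l.get j)) where
  Adj x y := x.1 ≠ y.1
  symm := ⟨fun _ _ h => Ne.symm h⟩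
  loopless := ⟨fun _ h => h rfl⟩

/-- `r_λ`, the chromatic symmetric function of the complete multipartite graph `G_λ`. -/
def rOf (m : Multiset ℕ) : MvPowerSeries ℕ ℚ := csf (multipartite m.toList)

/-- A set partition (of the whole vertex set) is stable if each block is independent. -/
def IsStable {V : Type} [Fintype V] [DecidableEq V] (G : SimpleGraph V)
    (P : Finpartition (Finset.univ : Finset V)) : Prop :=
  ∀ b ∈ P.parts, ∀ v ∈ b, ∀ w ∈ b, ¬ G.Adj v w

/-- The multiset of block sizes of a finpartition. -/
def typeOf {V : Type} [DecidableEq V] {s : Finset V} (P : Finpartition s) : Multiset ℕ :=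
  P.parts.val.map Finset.card

/-- The puzzles of `μ` into the list of parts `l`: tuples `(μ^1,…,μ^k)` with
`μ^i ⊢ l_i` whose combined parts form `μ`. -/
def puzzles (mu : Multiset ℕ) (l : List ℕ) : Finset (Fin l.length → Multiset ℕ) :=
  (Fintype.piFinset fun _ => mu.powerset.toFinset).filter
    (fun g => (∑ i, g i) = mu ∧ ∀ i, (g i).sum = l.get i)

/-- A canonical monomial whose exponents are the parts of `m`. -/
def dmon (m : Multiset ℕ) : ℕ →₀ ℕ := m.toList.toFinsupp

set_option maxHeartbeats 1000000


section CountA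

lemma nat_card_sigma {β : Type} [Fintype β] (γ : β → Type) [∀ b, Finite (γ b)] :
    Nat.card (Σ b, γ b) = ∑ b, Nat.card (γ b) := by
  letI : ∀ b, Fintype (γ b) := fun b => Fintype.ofFinite _
  rw [Nat.card_eq_fintype_card, Fintype.card_sigma]
  exact Finset.sum_congr rfl fun b _ => (Nat.card_eq_fintype_card).symm

lemma nat_card_equiv_ite (α β : Type) [Fintype α] [Fintype β] :
    Nat.card (α ≃ β) = if Nat.card α = Nat.card β then (Nat.card α).factorial else 0 := by
  classical
  simp only [Nat.card_eq_fintype_card]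
  split_ifs with h
  · exact Fintype.card_equiv (Fintype.equivOfCardEq h)
  · exact Fintype.card_eq_zero_iff.mpr ⟨fun E => h (Fintype.card_congr E)⟩

variable {V C W : Type} [Fintype V] [Fintype C] [Fintype W]

/-- equivalences compatible with fiber maps correspond to families of fiber equivalences -/
def restrictEquiv (π : W → C) (h : V → C) :
    {E : V ≃ W // ∀ v, π (E v) = h v} ≃ Π c : C, ({v : V // h v = c} ≃ {w : W // π w = c}) where
  toFun E c :=
    { toFun := fun x => ⟨E.1 x.1, by rw [E.2 x.1, x.2]⟩
      invFun := fun w => ⟨E.1.symm w.1, by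
        have h1 := E.2 (E.1.symm w.1)
        rw [Equiv.apply_symm_apply] at h1
        rw [← h1, w.2]⟩
      left_inv := fun x => Subtype.ext (E.1.symm_apply_apply x.1)
      right_inv := fun w => Subtype.ext (E.1.apply_symm_apply w.1) }
  invFun φ :=
    ⟨{ toFun := fun v => (φ (h v) ⟨v, rfl⟩).1
       invFun := fun w => ((φ (π w)).symm ⟨w, rfl⟩).1
       left_inv := fun v => by
         dsimp only
         have key : ∀ (c : C) (w : W) (hw : π w = c),
             ((φ (π w)).symm ⟨w, rfl⟩).1 = ((φ c).symm ⟨w, hw⟩).1 := by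
           rintro c w rfl; rfl
         rw [key (h v) _ (φ (h v) ⟨v, rfl⟩).2]
         simp
       right_inv := fun w => by
         dsimp only
         have key : ∀ (c : C) (v : V) (hv : h v = c),
             (φ (h v) ⟨v, rfl⟩).1 = (φ c ⟨v, hv⟩).1 := by
           rintro c v rfl; rfl
         rw [key (π w) _ ((φ (π w)).symm ⟨w, rfl⟩).2]
         simp }
       , fun v => (φ (h v) ⟨v, rfl⟩).2⟩
  left_inv E := Subtype.ext (Equiv.ext fun v => rfl)
  right_inv φ := by
    funext c
    apply Equiv.ext
    rintro ⟨v, rfl⟩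
    rfl

/-- the fiber of `Sigma.fst` -/
def sigmaFstFiber (β : C → Type) (c : C) : {w : Σ b : C, β b // w.1 = c} ≃ β c where
  toFun w := w.2 ▸ w.1.2
  invFun y := ⟨⟨c, y⟩, rfl⟩
  left_inv := by rintro ⟨⟨b, y⟩, rfl⟩; rfl
  right_inv y := rfl

lemma countA (e : C → ℕ) :
    Nat.card {h : V → C // ∀ c, Nat.card {v // h v = c} = e c} * ∏ c, (e c).factorial
      = if Nat.card V = ∑ c, e c then (Nat.card V).factorial else 0 := by
  classical
  set W := Σ c : C, Fin (e c) with hW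
  have hcW : Nat.card W = ∑ c, e c := by
    rw [nat_card_sigma]
    exact Finset.sum_congr rfl fun c _ => by simp [Nat.card_eq_fintype_card]
  have main : Nat.card (V ≃ W)
      = Nat.card {h : V → C // ∀ c, Nat.card {v // h v = c} = e c} * ∏ c, (e c).factorial := by
    have e1 : (V ≃ W) ≃ Σ h : V → C, {E : V ≃ W // ∀ v, (E v).1 = h v} := by
      refine (Equiv.sigmaFiberEquiv (fun (E : V ≃ W) => fun v => (E v).1)).symm.trans ?_
      exact Equiv.sigmaCongrRight fun h => Equiv.subtypeEquivRight fun E => funext_iff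
    rw [Nat.card_congr e1, nat_card_sigma]
    have e2 : ∀ h : V → C, Nat.card {E : V ≃ W // ∀ v, (E v).1 = h v}
        = if (∀ c, Nat.card {v // h v = c} = e c) then ∏ c, (e c).factorial else 0 := by
      intro h
      rw [Nat.card_congr (restrictEquiv (Sigma.fst : W → C) h), Nat.card_pi]
      have e3 : ∀ c : C, Nat.card ({v // h v = c} ≃ {w : W // w.1 = c})
          = if Nat.card {v // h v = c} = e c then (e c).factorial else 0 := by
        intro c
        rw [Nat.card_congr (Equiv.equivCongr (Equiv.refl _) (sigmaFstFiber (fun b => Fin (e b)) c)),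
          nat_card_equiv_ite]
        have h4 : Nat.card (Fin (e c)) = e c := by simp [Nat.card_eq_fintype_card]
        rw [h4]
        split_ifs with h5
        · rw [h5]
        · rfl
      rw [Finset.prod_congr rfl (fun c _ => e3 c)]
      by_cases hall : ∀ c, Nat.card {v // h v = c} = e c
      · rw [if_pos hall]
        exact Finset.prod_congr rfl fun c _ => by rw [if_pos (hall c)]
      · push_neg at hall
        obtain ⟨c0, hc0⟩ := hall
        rw [if_neg (by push_neg; exact ⟨c0, hc0⟩)]
        exact Finset.prod_eq_zero (Finset.mem_univ c0) (by rw [if_neg hc0])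
    rw [Finset.sum_congr rfl (fun h _ => e2 h)]
    rw [Finset.sum_ite, Finset.sum_const_zero, add_zero, Finset.sum_const, smul_eq_mul]
    congr 1
    rw [Nat.card_eq_fintype_card, Fintype.card_subtype]
  rw [← main, nat_card_equiv_ite, hcW]

lemma countA_rat (e : C → ℕ) :
    (Nat.card {h : V → C // ∀ c, Nat.card {v // h v = c} = e c} : ℚ)
      = if Nat.card V = ∑ c, e c then (Nat.card V).factorial / ∏ c, ((e c).factorial : ℚ) else 0 := by
  have hne : (∏ c, ((e c).factorial : ℚ)) ≠ 0 :=
    Finset.prod_ne_zero_iff.mpr fun c _ => Nat.cast_ne_zero.mpr (Nat.factorial_ne_zero _)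
  have hcast := congrArg (fun x : ℕ => (x : ℚ)) (countA (V := V) e)
  push_cast at hcast
  split_ifs at hcast ⊢ with h
  · field_simp at hcast ⊢
    linarith [hcast]
  · exact (mul_eq_zero.mp hcast).resolve_right hne

end CountA
section Step1
variable {C : Type} [Fintype C]

def sigmaSubtypeEquiv {ι : Type} (β : ι → Type) (P : (Σ i, β i) → Prop) :
    {x : Σ i, β i // P x} ≃ Σ i, {b : β i // P ⟨i, b⟩} where
  toFun x := ⟨x.1.1, x.1.2, by rw [Sigma.eta]; exact x.2⟩
  invFun y := ⟨⟨y.1, y.2.1⟩, y.2.2⟩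
  left_inv := by rintro ⟨⟨i, b⟩, h⟩; rfl
  right_inv := by rintro ⟨i, b, h⟩; rfl

lemma step1 (l : List ℕ) (d : C → ℕ) (hd : ∀ c, d c ≠ 0) :
    (Nat.card {κ : (Σ i : Fin l.length, Fin (l.get i)) → C //
        (∀ v w : (Σ i : Fin l.length, Fin (l.get i)), v.1 ≠ w.1 → κ v ≠ κ w) ∧
          ∀ c, Nat.card {v // κ v = c} = d c} : ℚ)
      = ((∏ i, ((l.get i).factorial : ℚ)) / ∏ c, ((d c).factorial : ℚ)) *
          ((univ.filter (fun f : C → Fin l.length =>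
            ∀ i, (∑ c ∈ univ.filter (fun c => f c = i), d c) = l.get i)).card : ℚ) := by
  classical
  set V := Σ i : Fin l.length, Fin (l.get i) with hV
  set Valid : (V → C) → Prop := fun κ =>
    (∀ v w : V, v.1 ≠ w.1 → κ v ≠ κ w) ∧ ∀ c, Nat.card {v // κ v = c} = d c with hValid
  have hsig : ∀ (κ : V → C) (c : C),
      Nat.card {v : V // κ v = c} = ∑ i, Nat.card {w : Fin (l.get i) // κ ⟨i, w⟩ = c} := by
    intro κ c
    rw [Nat.card_congr (sigmaSubtypeEquiv (fun i => Fin (l.get i)) (fun v => κ v = c)), nat_card_sigma]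
  -- blockwise characterization
  have hiff : ∀ (f : C → Fin l.length) (κ : V → C), (Valid κ ∧ ∀ v : V, f (κ v) = v.1)
      ↔ ∀ i c, Nat.card {w : Fin (l.get i) // κ ⟨i, w⟩ = c} = if f c = i then d c else 0 := by
    intro f κ
    constructor
    · rintro ⟨⟨hprop, hcount⟩, halign⟩ i c
      have hemp : ∀ i', f c ≠ i' → Nat.card {w : Fin (l.get i') // κ ⟨i', w⟩ = c} = 0 := by
        intro i' hne
        have : IsEmpty {w : Fin (l.get i') // κ ⟨i', w⟩ = c} := by
          refine ⟨fun x => hne ?_⟩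
          have h1 := halign ⟨i', x.1⟩
          rw [x.2] at h1
          exact h1
        exact Nat.card_of_isEmpty
      by_cases hfc : f c = i
      · rw [if_pos hfc]
        have h2 := hcount c
        rw [hsig κ c, Finset.sum_eq_single i
          (fun b _ hb => hemp b (by rw [hfc]; exact Ne.symm hb))
          (fun h => absurd (mem_univ i) h)] at h2
        exact h2
      · rw [if_neg hfc, hemp i hfc]
    · intro hblocks
      have halign : ∀ v : V, f (κ v) = v.1 := by
        intro v
        have h1 := hblocks v.1 (κ v)
        have hne : Nat.card {w : Fin (l.get v.1) // κ ⟨v.1, w⟩ = κ v} ≠ 0 :=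
          Nat.card_ne_zero.mpr ⟨⟨⟨v.2, congrArg κ (Sigma.eta v)⟩⟩, inferInstance⟩
        by_contra hcon
        rw [if_neg hcon] at h1
        exact hne h1
      refine ⟨⟨?_, ?_⟩, halign⟩
      · intro v w hvw heq
        have h1 := halign v
        have h2 := halign w
        rw [heq] at h1
        exact hvw (h1.symm.trans h2)
      · intro c
        rw [hsig κ c, Finset.sum_congr rfl (fun i _ => hblocks i c),
          Finset.sum_ite_eq univ (f c) (fun _ => d c)]
        simp
  -- the block map, defined by choice
  have ex : ∀ (p : {κ : V → C // Valid κ}) (c : C), ∃ v : V, p.1 v = c := by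
    intro p c
    have h := p.2.2 c
    have hne : Nat.card {v : V // p.1 v = c} ≠ 0 := by rw [h]; exact hd c
    obtain ⟨⟨⟨v, hv⟩⟩, _⟩ := Nat.card_ne_zero.mp hne
    exact ⟨v, hv⟩
  set B : {κ : V → C // Valid κ} → (C → Fin l.length) :=
    fun p c => (Classical.choose (ex p c)).1 with hB
  have hBspec : ∀ (p : {κ : V → C // Valid κ}) (c : C), p.1 (Classical.choose (ex p c)) = c :=
    fun p c => Classical.choose_spec (ex p c)
  have hBiff : ∀ (f : C → Fin l.length) (κ : V → C) (hκ : Valid κ),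
      (B ⟨κ, hκ⟩ = f ↔ ∀ v : V, f (κ v) = v.1) := by
    intro f κ hκ
    constructor
    · intro hBf v
      have h1 := hBspec ⟨κ, hκ⟩ (κ v)
      have h2 : (Classical.choose (ex ⟨κ, hκ⟩ (κ v))).1 = v.1 := by
        by_contra hne
        exact hκ.1 _ v hne h1
      rw [← hBf]
      exact h2
    · intro halign
      funext c
      have h1 := halign (Classical.choose (ex ⟨κ, hκ⟩ c))
      have h2 : κ (Classical.choose (ex ⟨κ, hκ⟩ c)) = c := hBspec ⟨κ, hκ⟩ c
      rw [h2] at h1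
      exact h1.symm
  have hdecomp : Nat.card {κ : V → C // Valid κ}
      = ∑ f : C → Fin l.length, Nat.card {p : {κ : V → C // Valid κ} // B p = f} := by
    rw [Nat.card_congr (Equiv.sigmaFiberEquiv B).symm, nat_card_sigma]
  have hfiber : ∀ f : C → Fin l.length, (Nat.card {p : {κ : V → C // Valid κ} // B p = f} : ℚ)
      = if (∀ i, (∑ c ∈ univ.filter (fun c => f c = i), d c) = l.get i)
          then (∏ i, ((l.get i).factorial : ℚ)) / ∏ c, ((d c).factorial : ℚ) else 0 := by
    intro f
    have E1 : {p : {κ : V → C // Valid κ} // B p = f}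
        ≃ {κ : V → C // ∀ i c, Nat.card {w : Fin (l.get i) // κ ⟨i, w⟩ = c}
            = if f c = i then d c else 0} := by
      refine (Equiv.subtypeSubtypeEquivSubtypeExists _ _).trans (Equiv.subtypeEquivRight ?_)
      intro κ
      constructor
      · rintro ⟨hκ, hBf⟩
        exact (hiff f κ).mp ⟨hκ, (hBiff f κ hκ).mp hBf⟩
      · intro hblocks
        have h2 := (hiff f κ).mpr hblocks
        exact ⟨h2.1, (hBiff f κ h2.1).mpr h2.2⟩
    have E2 : {κ : V → C // ∀ i c, Nat.card {w : Fin (l.get i) // κ ⟨i, w⟩ = c}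
            = if f c = i then d c else 0}
        ≃ Π i, {h : Fin (l.get i) → C // ∀ c, Nat.card {w : Fin (l.get i) // h w = c}
            = if f c = i then d c else 0} :=
      { toFun := fun κ => fun i => ⟨fun w => κ.1 ⟨i, w⟩, fun c => κ.2 i c⟩
        invFun := fun F => ⟨fun v => (F v.1).1 v.2, fun i c => (F i).2 c⟩
        left_inv := fun κ => Subtype.ext (funext fun v => congrArg κ.1 (Sigma.eta v))
        right_inv := fun F => funext fun i => Subtype.ext rfl }
    rw [Nat.card_congr (E1.trans E2), Nat.card_pi, Nat.cast_prod]
    have hi : ∀ i : Fin l.length, (Nat.card {h : Fin (l.get i) → C // ∀ c, Nat.card {w : Fin (l.get i) // h w = c}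
            = if f c = i then d c else 0} : ℚ)
        = if (∑ c ∈ univ.filter (fun c => f c = i), d c) = l.get i
            then ((l.get i).factorial : ℚ) / ∏ c ∈ univ.filter (fun c => f c = i), ((d c).factorial : ℚ)
            else 0 := by
      intro i
      rw [countA_rat (fun c => if f c = i then d c else 0)]
      have hc1 : Nat.card (Fin (l.get i)) = l.get i := by simp
      have hc2 : (∑ c, if f c = i then d c else 0) = ∑ c ∈ univ.filter (fun c => f c = i), d c :=
        (Finset.sum_filter _ _).symm
      have hc3 : (∏ c, (((if f c = i then d c else 0).factorial : ℕ) : ℚ))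
          = ∏ c ∈ univ.filter (fun c => f c = i), ((d c).factorial : ℚ) := by
        rw [Finset.prod_filter]
        refine Finset.prod_congr rfl fun c _ => ?_
        split_ifs <;> simp
      rw [hc1, hc2, hc3]
      exact if_congr eq_comm rfl rfl
    rw [Finset.prod_congr rfl (fun i _ => hi i)]
    by_cases hall : ∀ i, (∑ c ∈ univ.filter (fun c => f c = i), d c) = l.get i
    · rw [if_pos hall, Finset.prod_congr rfl (fun i _ => if_pos (hall i)),
        Finset.prod_div_distrib]
      congr 1
      exact Finset.prod_fiberwise_of_maps_to (fun c _ => mem_univ (f c)) _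
    · obtain ⟨i0, h0⟩ := not_forall.mp hall
      rw [if_neg hall]
      exact Finset.prod_eq_zero (mem_univ i0) (if_neg h0)
  calc (Nat.card {κ : V → C // Valid κ} : ℚ)
      = ∑ f : C → Fin l.length, (Nat.card {p : {κ : V → C // Valid κ} // B p = f} : ℚ) := by
        rw [hdecomp]; push_cast; rfl
    _ = ∑ f : C → Fin l.length, if (∀ i, (∑ c ∈ univ.filter (fun c => f c = i), d c) = l.get i)
          then (∏ i, ((l.get i).factorial : ℚ)) / ∏ c, ((d c).factorial : ℚ) else 0 :=
        Finset.sum_congr rfl fun f _ => hfiber f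
    _ = _ := by
        rw [Finset.sum_ite, Finset.sum_const_zero, add_zero, Finset.sum_const, nsmul_eq_mul]
        rw [mul_comm]

end Step1
section Step23
variable {C : Type} [Fintype C]

lemma multFact_ne_zero (m : Multiset ℕ) : multFact m ≠ 0 :=
  Finset.prod_ne_zero_iff.mpr fun j _ => Nat.factorial_ne_zero _

lemma gOf_count (l : List ℕ) (d : C → ℕ) (f : C → Fin l.length) (i : Fin l.length) (j : ℕ) :
    (Multiset.map d (univ.filter (fun c => f c = i)).val).count j
      = ((univ.filter (fun c => j = d c)).filter (fun c => f c = i)).card := by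
  classical
  rw [Multiset.count_map, ← Finset.filter_val]
  show ((univ.filter (fun c => f c = i)).filter (fun c => j = d c)).card = _
  rw [Finset.filter_filter, Finset.filter_filter]
  congr 1
  exact Finset.filter_congr fun c _ => and_comm

lemma gOf_sum (l : List ℕ) (d : C → ℕ) (f : C → Fin l.length) :
    (∑ i, Multiset.map d (univ.filter (fun c => f c = i)).val) = Multiset.map d univ.val := by
  classical
  ext j
  rw [Multiset.count_sum', Finset.sum_congr rfl (fun i _ => gOf_count l d f i j),
    ← Finset.card_eq_sum_card_fiberwise (fun c _ => mem_univ (f c)), Multiset.count_map]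
  rfl

lemma gOf_le (l : List ℕ) (d : C → ℕ) (f : C → Fin l.length) (i : Fin l.length) :
    Multiset.map d (univ.filter (fun c => f c = i)).val ≤ Multiset.map d univ.val :=
  Multiset.map_le_map (Finset.val_le_iff.mpr (Finset.filter_subset _ _))

lemma count_M (d : C → ℕ) (j : ℕ) :
    (Multiset.map d univ.val).count j = (univ.filter (fun c => d c = j)).card := by
  classical
  rw [Multiset.count_map, ← Finset.filter_val]
  show (univ.filter (fun c => j = d c)).card = _
  congr 1
  exact Finset.filter_congr fun c _ => eq_comm

lemma step3 (l : List ℕ) (d : C → ℕ) (g : Fin l.length → Multiset ℕ)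
    (hg : g ∈ puzzles (Multiset.map d univ.val) l) :
    (((univ : Finset (C → Fin l.length)).filter (fun f =>
        (fun i => Multiset.map d (univ.filter (fun c => f c = i)).val) = g)).card : ℚ)
      = (multFact (Multiset.map d univ.val) : ℚ) * ∏ i, (1:ℚ) / (multFact (g i) : ℚ) := by
  classical
  set M : Multiset ℕ := Multiset.map d univ.val with hM
  rw [puzzles, Finset.mem_filter] at hg
  obtain ⟨hgpi, hgsum, hglen⟩ := hg
  have hgle : ∀ i, g i ≤ M := by
    intro i
    have := Fintype.mem_piFinset.mp hgpi i
    rwa [Multiset.mem_toFinset, Multiset.mem_powerset] at this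
  have bridge : ∀ (f : C → Fin l.length) (i : Fin l.length) (j : ℕ),
      Nat.card {c : {c : C // d c = j} // f c.1 = i}
        = (Multiset.map d (univ.filter (fun c => f c = i)).val).count j := by
    intro f i j
    rw [gOf_count l d f i j,
      Nat.card_congr (Equiv.subtypeSubtypeEquivSubtypeInter (fun c : C => d c = j)
        (fun c => f c = i)),
      Nat.card_eq_fintype_card, Fintype.card_subtype, Finset.filter_filter]
    congr 1
    refine Finset.filter_congr fun c _ => ?_
    constructor
    · rintro ⟨h1, h2⟩; exact ⟨h1.symm, h2⟩
    · rintro ⟨h1, h2⟩; exact ⟨h1.symm, h2⟩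
  have hmemM : ∀ c : C, d c ∈ M.toFinset := by
    intro c
    rw [Multiset.mem_toFinset]
    exact Multiset.mem_map_of_mem d (Finset.mem_val.mpr (mem_univ c))
  have key : ∀ f : C → Fin l.length,
      ((fun i => Multiset.map d (univ.filter (fun c => f c = i)).val) = g)
        ↔ ∀ (j : ↥(M.toFinset)) (i : Fin l.length),
            Nat.card {c : {c : C // d c = (j : ℕ)} // f c.1 = i} = (g i).count (j : ℕ) := by
    intro f
    constructor
    · intro h j i
      rw [bridge f i (j : ℕ), ← h]
    · intro h
      funext i
      ext j
      by_cases hj : j ∈ M.toFinset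
      · rw [← bridge f i j]
        exact h ⟨j, hj⟩ i
      · rw [Multiset.mem_toFinset] at hj
        have h1 : (Multiset.map d (univ.filter (fun c => f c = i)).val).count j = 0 :=
          Multiset.count_eq_zero.mpr fun hmem => hj (Multiset.mem_of_le (gOf_le l d f i) hmem)
        have h2 : (g i).count j = 0 :=
          Multiset.count_eq_zero.mpr fun hmem => hj (Multiset.mem_of_le (hgle i) hmem)
        rw [h1, h2]
  have keyF : ∀ (G : Π j : ↥(M.toFinset), {c : C // d c = (j : ℕ)} → Fin l.length)
      (j : ↥(M.toFinset)) (c : C) (hc : d c = (j : ℕ)),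
      G ⟨d c, hmemM c⟩ ⟨c, rfl⟩ = G j ⟨c, hc⟩ := by
    rintro G ⟨jv, hjv⟩ c hc
    dsimp only at hc
    subst hc
    rfl
  have E3 : {f : C → Fin l.length // ∀ (j : ↥(M.toFinset)) (i : Fin l.length),
        Nat.card {c : {c : C // d c = (j : ℕ)} // f c.1 = i} = (g i).count (j : ℕ)}
      ≃ Π j : ↥(M.toFinset), {F : {c : C // d c = (j : ℕ)} → Fin l.length //
          ∀ i, Nat.card {c // F c = i} = (g i).count (j : ℕ)} :=
    { toFun := fun f j => ⟨fun c => f.1 c.1, fun i => f.2 j i⟩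
      invFun := fun F => ⟨fun c => (F ⟨d c, hmemM c⟩).1 ⟨c, rfl⟩, by
        intro j i
        have heq : ∀ c : {c : C // d c = (j : ℕ)},
            ((F ⟨d c.1, hmemM c.1⟩).1 ⟨c.1, rfl⟩ = i) ↔ ((F j).1 c = i) := by
          intro c
          rw [keyF (fun j => (F j).1) j c.1 c.2]
        exact (Nat.card_congr (Equiv.subtypeEquivRight heq)).trans ((F j).2 i)⟩
      left_inv := fun f => Subtype.ext rfl
      right_inv := fun F => by
        funext j
        refine Subtype.ext (funext fun c => ?_)
        exact keyF (fun j => (F j).1) j c.1 c.2 }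
  have hcard : (((univ : Finset (C → Fin l.length)).filter (fun f =>
      (fun i => Multiset.map d (univ.filter (fun c => f c = i)).val) = g)).card : ℚ)
      = ∏ j : ↥(M.toFinset), (Nat.card {F : {c : C // d c = (j : ℕ)} → Fin l.length //
          ∀ i, Nat.card {c // F c = i} = (g i).count (j : ℕ)} : ℚ) := by
    rw [← Fintype.card_subtype, ← Nat.card_eq_fintype_card,
      Nat.card_congr ((Equiv.subtypeEquivRight key).trans E3), Nat.card_pi]
    push_cast
    rfl
  rw [hcard]
  have hjcard : ∀ j : ↥(M.toFinset), Nat.card {c : C // d c = (j : ℕ)} = M.count (j : ℕ) := by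
    intro j
    rw [Nat.card_eq_fintype_card, Fintype.card_subtype, count_M]
  have hjsum : ∀ j : ↥(M.toFinset), (∑ i, (g i).count (j : ℕ)) = M.count (j : ℕ) := by
    intro j
    rw [← Multiset.count_sum', hgsum]
  have hj : ∀ j : ↥(M.toFinset), (Nat.card {F : {c : C // d c = (j : ℕ)} → Fin l.length //
        ∀ i, Nat.card {c // F c = i} = (g i).count (j : ℕ)} : ℚ)
      = ((M.count (j : ℕ)).factorial : ℚ) / ∏ i, (((g i).count (j : ℕ)).factorial : ℚ) := by
    intro j
    rw [countA_rat (fun i : Fin l.length => (g i).count (j : ℕ)), hjcard j, hjsum j, if_pos rfl]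
  rw [Finset.prod_congr rfl (fun j _ => hj j), Finset.prod_div_distrib]
  have hnum : (∏ j : ↥(M.toFinset), ((M.count (j : ℕ)).factorial : ℚ)) = (multFact M : ℚ) := by
    rw [Finset.prod_coe_sort M.toFinset (fun j => ((M.count j).factorial : ℚ)), multFact]
    push_cast
    rfl
  have hden : (∏ j : ↥(M.toFinset), ∏ i, (((g i).count (j : ℕ)).factorial : ℚ))
      = ∏ i, (multFact (g i) : ℚ) := by
    rw [Finset.prod_comm]
    refine Finset.prod_congr rfl fun i _ => ?_
    rw [Finset.prod_coe_sort M.toFinset (fun j => (((g i).count j).factorial : ℚ))]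
    rw [multFact]
    push_cast
    refine (Finset.prod_subset ?_ ?_).symm
    · intro j hjm
      rw [Multiset.mem_toFinset] at hjm ⊢
      exact Multiset.mem_of_le (hgle i) hjm
    · intro j _ hjn
      rw [Multiset.mem_toFinset] at hjn
      rw [Multiset.count_eq_zero.mpr hjn]
      norm_num
  rw [hnum, hden]
  rw [Finset.prod_div_distrib]
  simp [one_div, div_eq_mul_inv]

lemma step2 (l : List ℕ) (d : C → ℕ) :
    (((univ : Finset (C → Fin l.length)).filter (fun f =>
        ∀ i, (∑ c ∈ univ.filter (fun c => f c = i), d c) = l.get i)).card : ℚ)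
      = (multFact (Multiset.map d univ.val) : ℚ) *
          ∑ g ∈ puzzles (Multiset.map d univ.val) l, ∏ i, (1:ℚ) / (multFact (g i) : ℚ) := by
  classical
  set M : Multiset ℕ := Multiset.map d univ.val with hM
  set gOf : (C → Fin l.length) → (Fin l.length → Multiset ℕ) :=
    fun f i => Multiset.map d (univ.filter (fun c => f c = i)).val with hgOf
  have hsumdef : ∀ (f : C → Fin l.length) (i : Fin l.length),
      (gOf f i).sum = ∑ c ∈ univ.filter (fun c => f c = i), d c := fun f i => rfl
  have hmaps : ∀ f ∈ (univ : Finset (C → Fin l.length)).filter (fun f =>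
      ∀ i, (∑ c ∈ univ.filter (fun c => f c = i), d c) = l.get i), gOf f ∈ puzzles M l := by
    intro f hf
    rw [Finset.mem_filter] at hf
    rw [puzzles, Finset.mem_filter]
    refine ⟨Fintype.mem_piFinset.mpr fun i => ?_, gOf_sum l d f, fun i => ?_⟩
    · rw [Multiset.mem_toFinset, Multiset.mem_powerset]
      exact gOf_le l d f i
    · rw [hsumdef f i]
      exact hf.2 i
  rw [Finset.card_eq_sum_card_fiberwise hmaps]
  push_cast
  rw [Finset.mul_sum]
  refine Finset.sum_congr rfl fun g hgmem => ?_
  have hfilt : ((univ : Finset (C → Fin l.length)).filter (fun f =>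
        ∀ i, (∑ c ∈ univ.filter (fun c => f c = i), d c) = l.get i)).filter (fun f => gOf f = g)
      = (univ : Finset (C → Fin l.length)).filter (fun f => gOf f = g) := by
    rw [Finset.filter_filter]
    refine Finset.filter_congr fun f _ => ?_
    constructor
    · rintro ⟨_, h2⟩; exact h2
    · intro h2
      refine ⟨fun i => ?_, h2⟩
      rw [← hsumdef f i, h2]
      rw [puzzles, Finset.mem_filter] at hgmem
      exact hgmem.2.2 i
  rw [hfilt, step3 l d g hgmem]

end Step23
section Final

lemma nat_card_subtype {α : Type} [Fintype α] (p : α → Prop) :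
    Nat.card {v // p v} = (univ.filter (fun a => p a)).card := by
  classical
  rw [Nat.card_eq_fintype_card]
  simp [Fintype.card_subtype]

lemma expParts_dmon (m : Multiset ℕ) (hm : ∀ x ∈ m, x ≠ 0) : expParts (dmon m) = m := by
  classical
  have hsupp : (dmon m).support = Finset.range m.toList.length := by
    rw [dmon, List.toFinsupp_support, Finset.filter_eq_self]
    intro i hi
    rw [Finset.mem_range] at hi
    rw [List.getD_eq_getElem _ _ hi]
    exact hm _ ((Multiset.mem_toList).mp (List.getElem_mem hi))
  rw [expParts, hsupp, Finset.range_val, ← Multiset.coe_range, Multiset.map_coe]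
  have hlist : List.map (⇑(dmon m)) (List.range m.toList.length) = m.toList := by
    apply List.ext_getElem
    · simp
    · intro i h1 h2
      simp only [List.getElem_map, List.getElem_range]
      rw [dmon, List.toFinsupp_apply, List.getD_eq_getElem _ _ h2]
  rw [hlist, Multiset.coe_toList]

end Final

/-- The coefficient of the augmented monomial `m̃_μ` in `r_λ` is
`(∏ λ_i!/∏ μ_i!) ∑_{puzzles μ→λ} 1/∏_{i,j} n_j(μ^i)!`.  (The coefficient of `m̃_μ` in a
symmetric function `f` is the coefficient in `f` of a monomial with exponents the parts
of `μ`, divided by `∏ n_i(μ)!`.) -/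
theorem stmt8 (n : ℕ) (lam mu : Nat.Partition n) :
    (MvPowerSeries.coeff (dmon mu.parts) (rOf lam.parts)) / (multFact mu.parts : ℚ) =
      (((lam.parts.map Nat.factorial).prod : ℚ) / ((mu.parts.map Nat.factorial).prod : ℚ)) *
        ∑ g ∈ puzzles mu.parts lam.parts.toList, ∏ i, (1 : ℚ) / (multFact (g i) : ℚ) := by
  classical
  set L : List ℕ := lam.parts.toList with hL
  set d : ℕ →₀ ℕ := dmon mu.parts with hd
  have hparts : expParts d = mu.parts :=
    expParts_dmon mu.parts (fun x hx => (mu.parts_pos hx).ne')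
  set dd : ↥d.support → ℕ := fun c => d c.1 with hdddef
  have hdd : ∀ c : ↥d.support, dd c ≠ 0 := fun c => Finsupp.mem_support_iff.mp c.2
  have hM : Multiset.map dd (univ : Finset ↥d.support).val = mu.parts := by
    rw [← hparts, expParts, Finset.univ_eq_attach, Finset.attach_val]
    exact Multiset.attach_map_val' d.support.val (⇑d)
  -- the coefficient is a number of proper colorings
  have hcoeff : (MvPowerSeries.coeff d (rOf lam.parts))
      = (Nat.card {κ : (Σ j : Fin L.length, Fin (L.get j)) → ℕ //
          (∀ v w, (multipartite L).Adj v w → κ v ≠ κ w) ∧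
            ∀ c, (univ.filter (fun v => κ v = c)).card = d c} : ℚ) := rfl
  -- transfer to colorings valued in the support of d
  have hval : ∀ (κ : (Σ j : Fin L.length, Fin (L.get j)) → ℕ),
      (∀ c, (univ.filter (fun v => κ v = c)).card = d c) → ∀ v, κ v ∈ d.support := by
    intro κ hc v
    rw [Finsupp.mem_support_iff, ← hc (κ v)]
    exact Finset.card_ne_zero_of_mem (Finset.mem_filter.mpr ⟨mem_univ v, rfl⟩)
  have EA : {κ : (Σ j : Fin L.length, Fin (L.get j)) → ℕ //
          (∀ v w, (multipartite L).Adj v w → κ v ≠ κ w) ∧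
            ∀ c, (univ.filter (fun v => κ v = c)).card = d c}
      ≃ {κ : (Σ i : Fin L.length, Fin (L.get i)) → ↥d.support //
          (∀ v w : (Σ i : Fin L.length, Fin (L.get i)), v.1 ≠ w.1 → κ v ≠ κ w) ∧
            ∀ c, Nat.card {v // κ v = c} = dd c} :=
    { toFun := fun κ => ⟨fun v => ⟨κ.1 v, hval κ.1 κ.2.2 v⟩,
        fun v w hvw heq => κ.2.1 v w hvw (congrArg Subtype.val heq),
        fun c => by
          rw [nat_card_subtype]
          simp only [Subtype.ext_iff]
          exact κ.2.2 c.1⟩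
      invFun := fun κ => ⟨fun v => (κ.1 v).1,
        fun v w hvw heq => κ.2.1 v w hvw (Subtype.ext heq),
        fun c => by
          by_cases hc : c ∈ d.support
          · have h1 := κ.2.2 ⟨c, hc⟩
            rw [nat_card_subtype] at h1
            simp only [Subtype.ext_iff] at h1
            simpa using h1
          · rw [Finsupp.notMem_support_iff.mp hc, Finset.card_eq_zero,
              Finset.filter_eq_empty_iff]
            intro v _ hveq
            exact hc (hveq ▸ (κ.1 v).2)⟩
      left_inv := fun κ => Subtype.ext rfl
      right_inv := fun κ => Subtype.ext (funext fun v => Subtype.ext rfl) }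
  rw [hcoeff, Nat.card_congr EA, step1 L dd hdd, step2 L dd, hM]
  -- identify the products of factorials
  have hA1n : (∏ i, (L.get i).factorial) = (lam.parts.map Nat.factorial).prod := by
    have h1 : lam.parts.map Nat.factorial = ((L.map Nat.factorial : List ℕ) : Multiset ℕ) := by
      rw [hL, ← Multiset.map_coe, Multiset.coe_toList]
    rw [h1, Multiset.prod_coe]
    have h2 : L.map Nat.factorial = List.ofFn (fun i => (L.get i).factorial) := by
      conv_lhs => rw [← List.ofFn_get L]
      rw [List.map_ofFn]
      rfl
    rw [h2, List.prod_ofFn]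
  have hA1 : (∏ i, ((L.get i).factorial : ℚ)) = ((lam.parts.map Nat.factorial).prod : ℚ) := by
    rw [← hA1n]
    push_cast
    rfl
  have hA2n : (∏ c : ↥d.support, (dd c).factorial) = (mu.parts.map Nat.factorial).prod := by
    have h1 : mu.parts.map Nat.factorial
        = Multiset.map (fun c => (dd c).factorial) (univ : Finset ↥d.support).val := by
      rw [← hM, Multiset.map_map]
      rfl
    rw [h1]
    rfl
  have hA2 : (∏ c : ↥d.support, ((dd c).factorial : ℚ)) = ((mu.parts.map Nat.factorial).prod : ℚ) := by
    rw [← hA2n]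
    push_cast
    rfl
  rw [hA1, hA2]
  have hmf : ((multFact mu.parts : ℚ)) ≠ 0 := Nat.cast_ne_zero.mpr (multFact_ne_zero _)
  have harith : ∀ (X S m : ℚ), m ≠ 0 → X * (m * S) / m = X * S := by
    intro X S m hm
    field_simp
  exact harith _ _ _ hmf
end
end

section
/- For the complete multipartite graph G_λ on n = |λ| vertices with maximal stable partition P of type λ, and any partition μ ⊢ n: the sum over all set partitions π refining P of the coefficient [r_μ] m̃_{λ(π)} equals the Kronecker delta δ_{λ,μ}. -/
open Finset
open scoped Classical

noncomputable section

section CompatEquiv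

variable {α β : Type} [Fintype α] [Fintype β]

lemma card_fiber_eq_count (u : α → ℕ) (j : ℕ) :
    Fintype.card {x // u x = j} = Multiset.count j (Multiset.map u Finset.univ.val) := by
  rw [Fintype.card_subtype, Multiset.count_map]
  show Multiset.card (Multiset.filter _ _) = _
  congr 1
  exact Multiset.filter_congr (fun x _ => eq_comm)

lemma card_compat_equiv (u : α → ℕ) (v : β → ℕ)
    (h : Multiset.map u Finset.univ.val = Multiset.map v Finset.univ.val) :
    Nat.card {e : α ≃ β // ∀ x, v (e x) = u x}
      = multFact (Multiset.map u Finset.univ.val) := by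
  classical
  set J : Finset ℕ := (Multiset.map u Finset.univ.val).toFinset with hJ
  have hxu : ∀ x : α, u x ∈ J := fun x => by
    simp only [hJ, Multiset.mem_toFinset, Multiset.mem_map]
    exact ⟨x, (Finset.mem_univ x), rfl⟩
  have hyv : ∀ y : β, v y ∈ J := fun y => by
    simp only [hJ, h, Multiset.mem_toFinset, Multiset.mem_map]
    exact ⟨y, (Finset.mem_univ y), rfl⟩
  -- the gluing map
  let f : (∀ j : J, {x // u x = j.1} ≃ {y // v y = j.1}) → α → β :=
    fun F x => (F ⟨u x, hxu x⟩ ⟨x, rfl⟩).1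
  let g : (∀ j : J, {x // u x = j.1} ≃ {y // v y = j.1}) → β → α :=
    fun F y => ((F ⟨v y, hyv y⟩).symm ⟨y, rfl⟩).1
  have aux1 : ∀ F (j : J) (z : {x // u x = j.1}), f F z.1 = (F j z).1 := by
    rintro F ⟨j, hj⟩ ⟨x, hx⟩
    dsimp only at hx ⊢
    subst hx
    rfl
  have aux2 : ∀ F (j : J) (z : {y // v y = j.1}), g F z.1 = ((F j).symm z).1 := by
    rintro F ⟨j, hj⟩ ⟨y, hy⟩
    dsimp only at hy ⊢
    subst hy
    rfl
  have hvf : ∀ F x, v (f F x) = u x := fun F x => (F ⟨u x, hxu x⟩ ⟨x, rfl⟩).2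
  have hug : ∀ F y, u (g F y) = v y := fun F y => ((F ⟨v y, hyv y⟩).symm ⟨y, rfl⟩).2
  have hgf : ∀ F x, g F (f F x) = x := by
    intro F x
    have := aux2 F ⟨u x, hxu x⟩ (F ⟨u x, hxu x⟩ ⟨x, rfl⟩)
    rw [this, Equiv.symm_apply_apply]
  have hfg : ∀ F y, f F (g F y) = y := by
    intro F y
    have := aux1 F ⟨v y, hyv y⟩ ((F ⟨v y, hyv y⟩).symm ⟨y, rfl⟩)
    rw [this, Equiv.apply_symm_apply]
  let Φ : (∀ j : J, {x // u x = j.1} ≃ {y // v y = j.1}) →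
      {e : α ≃ β // ∀ x, v (e x) = u x} :=
    fun F => ⟨⟨f F, g F, hgf F, hfg F⟩, hvf F⟩
  have hbij : Function.Bijective Φ := by
    constructor
    · intro F F' hFF
      have hff : f F = f F' := congrArg (fun e => e.1.toFun) hFF
      funext j
      apply Equiv.ext
      intro z
      apply Subtype.ext
      rw [← aux1 F j z, ← aux1 F' j z, hff]
    · rintro ⟨e, he⟩
      refine ⟨fun j => e.subtypeEquiv (fun a => by rw [he a]), ?_⟩
      apply Subtype.ext
      apply Equiv.ext
      intro x
      rfl
  rw [← Nat.card_eq_of_bijective Φ hbij, Nat.card_eq_fintype_card, Fintype.card_pi]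
  have hcard : ∀ j : J, Fintype.card {x // u x = j.1} = Fintype.card {y // v y = j.1} := by
    intro j
    rw [card_fiber_eq_count, card_fiber_eq_count, h]
  calc ∏ j : J, Fintype.card ({x // u x = j.1} ≃ {y // v y = j.1})
      = ∏ j : J, (Fintype.card {x // u x = j.1}).factorial := by
        refine Finset.prod_congr rfl (fun j _ => ?_)
        exact Fintype.card_equiv (Fintype.equivOfCardEq (hcard j))
    _ = ∏ j ∈ J, (Multiset.count j (Multiset.map u Finset.univ.val)).factorial := by
        rw [← Finset.prod_coe_sort J]
        exact Finset.prod_congr rfl (fun j _ => by rw [card_fiber_eq_count])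
    _ = multFact (Multiset.map u Finset.univ.val) := rfl

end CompatEquiv

section Fiber

variable {V : Type} [Fintype V] [DecidableEq V]

def fib (κ : V → ℕ) (c : ℕ) : Finset V := Finset.univ.filter (fun v => κ v = c)

lemma mem_fib {κ : V → ℕ} {c : ℕ} {v : V} : v ∈ fib κ c ↔ κ v = c := by simp [fib]

def fiberPartition (κ : V → ℕ) : Finpartition (Finset.univ : Finset V) where
  parts := (Finset.univ.image κ).image (fib κ)
  supIndep := by
    rw [Finset.supIndep_iff_pairwiseDisjoint]
    rintro x hx y hy hxy
    obtain ⟨c, -, rfl⟩ := Finset.mem_image.1 (Finset.mem_coe.1 hx)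
    obtain ⟨c', -, rfl⟩ := Finset.mem_image.1 (Finset.mem_coe.1 hy)
    simp only [Function.onFun, id]
    rw [Finset.disjoint_left]
    intro v hv hv'
    exact hxy (by rw [← mem_fib.1 hv, mem_fib.1 hv'])
  sup_parts := by
    apply Finset.Subset.antisymm (Finset.subset_univ _)
    intro v _
    rw [Finset.mem_sup]
    exact ⟨fib κ (κ v),
      Finset.mem_image_of_mem _ (Finset.mem_image_of_mem _ (Finset.mem_univ v)),
      mem_fib.2 rfl⟩
  bot_notMem := by
    rw [Finset.bot_eq_empty, Finset.mem_image]
    rintro ⟨c, hc, hc'⟩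
    obtain ⟨v, -, rfl⟩ := Finset.mem_image.1 hc
    have hv : v ∈ fib κ (κ v) := mem_fib.2 rfl
    rw [hc'] at hv
    exact Finset.notMem_empty v hv

lemma mem_fiberParts_iff {κ : V → ℕ} {b : Finset V} :
    b ∈ (fiberPartition κ).parts ↔ ∃ c ∈ Finset.univ.image κ, b = fib κ c := by
  show b ∈ (Finset.univ.image κ).image (fib κ) ↔ _
  simp [eq_comm]

lemma part_fiberPartition (κ : V → ℕ) (v : V) :
    (fiberPartition κ).part v = fib κ (κ v) :=
  Finpartition.part_eq_of_mem _
    (mem_fiberParts_iff.2 ⟨κ v, Finset.mem_image_of_mem _ (Finset.mem_univ v), rfl⟩)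
    (mem_fib.2 rfl)

lemma image_eq_support {κ : V → ℕ} {d : ℕ →₀ ℕ}
    (hd : ∀ c, (Finset.univ.filter (fun v => κ v = c)).card = d c) :
    Finset.univ.image κ = d.support := by
  ext c
  rw [Finset.mem_image, Finsupp.mem_support_iff, ← hd c]
  constructor
  · rintro ⟨v, -, rfl⟩
    exact Finset.card_ne_zero_of_mem (mem_fib.2 rfl)
  · intro h
    obtain ⟨v, hv⟩ := Finset.card_pos.1 (Nat.pos_of_ne_zero h)
    exact ⟨v, Finset.mem_univ v, mem_fib.1 hv⟩

lemma fib_injOn (κ : V → ℕ) : Set.InjOn (fib κ) (Finset.univ.image κ) := by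
  intro c hc c' _ hcc
  obtain ⟨v, -, rfl⟩ := Finset.mem_image.1 (Finset.mem_coe.1 hc)
  have : v ∈ fib κ c' := hcc ▸ mem_fib.2 rfl
  exact mem_fib.1 this

lemma typeOf_fiberPartition {κ : V → ℕ} {d : ℕ →₀ ℕ}
    (hd : ∀ c, (Finset.univ.filter (fun v => κ v = c)).card = d c) :
    typeOf (fiberPartition κ) = expParts d := by
  show ((Finset.univ.image κ).image (fib κ)).val.map Finset.card = d.support.val.map d
  rw [Finset.image_val_of_injOn (fib_injOn κ), Multiset.map_map, image_eq_support hd]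
  exact Multiset.map_congr rfl (fun c _ => hd c)

lemma isStable_fiberPartition {G : SimpleGraph V} {κ : V → ℕ}
    (hp : ∀ v w, G.Adj v w → κ v ≠ κ w) : IsStable G (fiberPartition κ) := by
  intro b hb v hv w hw hadj
  obtain ⟨c, -, rfl⟩ := mem_fiberParts_iff.1 hb
  exact hp v w hadj ((mem_fib.1 hv).trans (mem_fib.1 hw).symm)

lemma attach_map_fn {α : Type} [DecidableEq α] (s : Finset α) (f : α → ℕ) :
    Multiset.map (fun b : {x // x ∈ s} => f b.1) Finset.univ.val = s.val.map f := by
  rw [Finset.univ_eq_attach]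
  show Multiset.map _ s.val.attach = _
  calc Multiset.map (fun b : {x // x ∈ s} => f b.1) s.val.attach
      = Multiset.map f (Multiset.map Subtype.val s.val.attach) := by
        rw [Multiset.map_map]; rfl
    _ = s.val.map f := by rw [Multiset.attach_map_val]

lemma card_colorings_eq (G : SimpleGraph V) (d : ℕ →₀ ℕ)
    (π : Finpartition (Finset.univ : Finset V))
    (hstab : IsStable G π) (ht : expParts d = typeOf π) :
    Nat.card {κ : V → ℕ // ((∀ v w, G.Adj v w → κ v ≠ κ w) ∧
      ∀ c, (Finset.univ.filter (fun v => κ v = c)).card = d c) ∧ fiberPartition κ = π}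
      = multFact (typeOf π) := by
  classical
  -- the space of labelings
  let T := {e : {b // b ∈ π.parts} ≃ {c // c ∈ d.support} //
    ∀ b : {b // b ∈ π.parts}, d (e b).1 = b.1.card}
  -- the gluing map
  have hpm : ∀ v : V, π.part v ∈ π.parts := fun v => π.part_mem.2 (Finset.mem_univ v)
  let kap : T → V → ℕ := fun e v => (e.1 ⟨π.part v, hpm v⟩).1
  have hfibeq : ∀ (e : T) (b : {b // b ∈ π.parts}), fib (kap e) ((e.1 b).1) = b.1 := by
    rintro e b
    ext v
    rw [mem_fib]
    constructor
    · intro hv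
      have h1 : e.1 ⟨π.part v, hpm v⟩ = e.1 b := Subtype.ext hv
      have h2 : π.part v = b.1 := congrArg Subtype.val (e.1.injective h1)
      exact h2 ▸ π.mem_part (Finset.mem_univ v)
    · intro hv
      show (e.1 ⟨π.part v, hpm v⟩).1 = _
      congr 2
      exact Subtype.ext (π.part_eq_of_mem b.2 hv)
  have himg : ∀ e : T, Finset.univ.image (kap e) = d.support := by
    intro e
    apply Finset.Subset.antisymm
    · intro c hc
      obtain ⟨v, -, rfl⟩ := Finset.mem_image.1 hc
      exact (e.1 ⟨π.part v, hpm v⟩).2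
    · intro c hc
      set b := e.1.symm ⟨c, hc⟩ with hb
      obtain ⟨v, hv⟩ := π.nonempty_of_mem_parts b.2
      refine Finset.mem_image.2 ⟨v, Finset.mem_univ v, ?_⟩
      have h2 : (⟨π.part v, hpm v⟩ : {b // b ∈ π.parts}) = b :=
        Subtype.ext (π.part_eq_of_mem b.2 hv)
      show (e.1 ⟨π.part v, hpm v⟩).1 = c
      rw [h2, hb, Equiv.apply_symm_apply]
  have hdist : ∀ (e : T) (c : ℕ), (Finset.univ.filter (fun v => kap e v = c)).card = d c := by
    intro e c
    show (fib (kap e) c).card = d c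
    by_cases hc : c ∈ d.support
    · set b := e.1.symm ⟨c, hc⟩ with hb
      have h1 : (e.1 b).1 = c := by rw [hb, Equiv.apply_symm_apply]
      rw [← h1, hfibeq e b, ← e.2 b, h1]
    · have h0 : d c = 0 := Finsupp.notMem_support_iff.1 hc
      rw [h0, Finset.card_eq_zero, Finset.eq_empty_iff_forall_notMem]
      intro v hv
      have : kap e v ∈ d.support := (e.1 ⟨π.part v, hpm v⟩).2
      rw [mem_fib.1 hv] at this
      exact hc this
  have hproper : ∀ (e : T) (v w : V), G.Adj v w → kap e v ≠ kap e w := by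
    intro e v w hadj heq
    have h1 : e.1 ⟨π.part v, hpm v⟩ = e.1 ⟨π.part w, hpm w⟩ := Subtype.ext heq
    have h2 : π.part v = π.part w := congrArg Subtype.val (e.1.injective h1)
    exact hstab (π.part w) (hpm w) v (h2 ▸ π.mem_part (Finset.mem_univ v)) w
      (π.mem_part (Finset.mem_univ w)) hadj
  have hfp : ∀ e : T, fiberPartition (kap e) = π := by
    intro e
    apply Finpartition.ext
    ext b
    rw [mem_fiberParts_iff]
    constructor
    · rintro ⟨c, hc, rfl⟩
      rw [himg e] at hc
      have h1 : (e.1 (e.1.symm ⟨c, hc⟩)).1 = c := by rw [Equiv.apply_symm_apply]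
      rw [← h1, hfibeq e _]
      exact (e.1.symm ⟨c, hc⟩).2
    · intro hb
      refine ⟨(e.1 ⟨b, hb⟩).1, ?_, ?_⟩
      · rw [himg e]; exact (e.1 ⟨b, hb⟩).2
      · rw [hfibeq e ⟨b, hb⟩]
  let Ψ : T → {κ : V → ℕ // ((∀ v w, G.Adj v w → κ v ≠ κ w) ∧
      ∀ c, (Finset.univ.filter (fun v => κ v = c)).card = d c) ∧ fiberPartition κ = π} :=
    fun e => ⟨kap e, ⟨hproper e, hdist e⟩, hfp e⟩
  have hbij : Function.Bijective Ψ := by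
    constructor
    · intro e e' hee
      have hk : kap e = kap e' := congrArg Subtype.val hee
      apply Subtype.ext
      apply Equiv.ext
      intro b
      apply Subtype.ext
      obtain ⟨v, hv⟩ := π.nonempty_of_mem_parts b.2
      have h2 : (⟨π.part v, hpm v⟩ : {b // b ∈ π.parts}) = b :=
        Subtype.ext (π.part_eq_of_mem b.2 hv)
      calc (e.1 b).1 = kap e v := by rw [← h2]
        _ = kap e' v := by rw [hk]
        _ = (e'.1 b).1 := by rw [← h2]
    · rintro ⟨κ0, ⟨hprop0, hdist0⟩, hfp0⟩
      -- build the labeling from a coloring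
      have hchoose : ∀ b : {b // b ∈ π.parts}, (π.nonempty_of_mem_parts b.2).choose ∈ b.1 :=
        fun b => (π.nonempty_of_mem_parts b.2).choose_spec
      let colorOf : {b // b ∈ π.parts} → ℕ :=
        fun b => κ0 ((π.nonempty_of_mem_parts b.2).choose)
      have hbfib : ∀ b : {b // b ∈ π.parts}, b.1 = fib κ0 (colorOf b) := by
        intro b
        have hb' : b.1 ∈ (fiberPartition κ0).parts := hfp0 ▸ b.2
        obtain ⟨c, -, hc⟩ := mem_fiberParts_iff.1 hb'
        have h4 : colorOf b = c := by
          have h5 : Exists.choose (π.nonempty_of_mem_parts b.2) ∈ fib κ0 c := by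
            rw [← hc]; exact hchoose b
          exact (mem_fib (κ := κ0)).1 h5
        rw [h4, hc]
      have hmem : ∀ b : {b // b ∈ π.parts}, colorOf b ∈ d.support := by
        intro b
        rw [Finsupp.mem_support_iff, ← hdist0 (colorOf b)]
        show (fib κ0 (colorOf b)).card ≠ 0
        rw [← hbfib b]
        exact Finset.card_ne_zero_of_mem (hchoose b)
      let f : {b // b ∈ π.parts} → {c // c ∈ d.support} := fun b => ⟨colorOf b, hmem b⟩
      have hfinj : Function.Injective f := by
        intro b b' hbb
        apply Subtype.ext
        rw [hbfib b, hbfib b']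
        rw [Subtype.ext_iff] at hbb
        exact congrArg (fib κ0) hbb
      have hfsurj : Function.Surjective f := by
        rintro ⟨c, hc⟩
        have hcimg : c ∈ Finset.univ.image κ0 := by
          rw [image_eq_support hdist0]; exact hc
        have hbp : fib κ0 c ∈ π.parts := by
          rw [← hfp0]
          exact mem_fiberParts_iff.2 ⟨c, hcimg, rfl⟩
        refine ⟨⟨fib κ0 c, hbp⟩, ?_⟩
        apply Subtype.ext
        show colorOf ⟨fib κ0 c, hbp⟩ = c
        exact (mem_fib (κ := κ0)).1 (hchoose ⟨fib κ0 c, hbp⟩)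
      let e : {b // b ∈ π.parts} ≃ {c // c ∈ d.support} := Equiv.ofBijective f ⟨hfinj, hfsurj⟩
      have he2 : ∀ b : {b // b ∈ π.parts}, d (e b).1 = b.1.card := by
        intro b
        show d (colorOf b) = b.1.card
        rw [hbfib b, ← hdist0 (colorOf b)]
        rfl
      refine ⟨⟨e, he2⟩, ?_⟩
      apply Subtype.ext
      show kap ⟨e, he2⟩ = κ0
      funext v
      show colorOf ⟨π.part v, hpm v⟩ = κ0 v
      have h1 : π.part v = fib κ0 (κ0 v) := by
        rw [← hfp0]; exact part_fiberPartition κ0 v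
      have h2 : Exists.choose (π.nonempty_of_mem_parts (hpm v)) ∈ fib κ0 (κ0 v) := by
        rw [← h1]; exact hchoose ⟨π.part v, hpm v⟩
      exact (mem_fib (κ := κ0)).1 h2
  rw [← Nat.card_eq_of_bijective Ψ hbij]
  have hmap : Multiset.map (fun b : {b // b ∈ π.parts} => b.1.card) Finset.univ.val
      = typeOf π := by rw [attach_map_fn]; rfl
  have hmap2 : Multiset.map (fun c : {c // c ∈ d.support} => d c.1) Finset.univ.val
      = expParts d := by rw [attach_map_fn]; rfl
  have h := card_compat_equiv (fun b : {b // b ∈ π.parts} => b.1.card)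
    (fun c : {c // c ∈ d.support} => d c.1) (by rw [hmap, hmap2]; exact ht.symm)
  rw [hmap] at h
  exact h

end Fiber

lemma csf_apply {V : Type} [Fintype V] [DecidableEq V] (G : SimpleGraph V) (d : ℕ →₀ ℕ) :
    csf G d = ∑ π : Finpartition (Finset.univ : Finset V),
      (if IsStable G π ∧ expParts d = typeOf π then (multFact (typeOf π) : ℚ) else 0) := by
  classical
  have key : Nat.card {κ : V → ℕ // (∀ v w, G.Adj v w → κ v ≠ κ w) ∧
      ∀ c, (Finset.univ.filter (fun v => κ v = c)).card = d c}
      = ∑ π : Finpartition (Finset.univ : Finset V),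
        (if IsStable G π ∧ expParts d = typeOf π then multFact (typeOf π) else 0) := by
    set p : (V → ℕ) → Prop := fun κ => (∀ v w, G.Adj v w → κ v ≠ κ w) ∧
      ∀ c, (Finset.univ.filter (fun v => κ v = c)).card = d c with hp
    have hsupp : ∀ κ : V → ℕ, p κ → ∀ v, κ v ∈ d.support := fun κ hκ v => by
      rw [Finsupp.mem_support_iff, ← hκ.2 (κ v)]
      exact Finset.card_ne_zero_of_mem (mem_fib.2 rfl)
    have hfin : Finite {κ : V → ℕ // p κ} :=
      Finite.of_injective
        (fun κ => (fun v => (⟨κ.1 v, hsupp κ.1 κ.2 v⟩ : {c // c ∈ d.support})))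
        (fun κ κ' h => Subtype.ext (funext fun v => congrArg Subtype.val (congrFun h v)))
    have := Fintype.ofFinite {κ : V → ℕ // p κ}
    have e1 : {κ : V → ℕ // p κ} ≃ Σ π : Finpartition (Finset.univ : Finset V),
        {κ : {κ : V → ℕ // p κ} // fiberPartition κ.1 = π} :=
      (Equiv.sigmaFiberEquiv (fun κ : {κ : V → ℕ // p κ} => fiberPartition κ.1)).symm
    rw [Nat.card_congr e1, Nat.card_eq_fintype_card, Fintype.card_sigma]
    refine Finset.sum_congr rfl (fun π _ => ?_)
    have e2 : {κ : {κ : V → ℕ // p κ} // fiberPartition κ.1 = π}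
        ≃ {κ : V → ℕ // p κ ∧ fiberPartition κ = π} :=
      Equiv.subtypeSubtypeEquivSubtypeInter p (fun κ => fiberPartition κ = π)
    rw [← Nat.card_eq_fintype_card, Nat.card_congr e2]
    by_cases hc : IsStable G π ∧ expParts d = typeOf π
    · rw [if_pos hc]
      exact card_colorings_eq G d π hc.1 hc.2
    · rw [if_neg hc]
      have : IsEmpty {κ : V → ℕ // p κ ∧ fiberPartition κ = π} := by
        refine ⟨fun κ => hc ?_⟩
        obtain ⟨κ0, ⟨hκp, hκπ⟩⟩ := κ
        constructor
        · rw [← hκπ]; exact isStable_fiberPartition hκp.1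
        · rw [← hκπ]; exact (typeOf_fiberPartition hκp.2).symm
      exact Nat.card_of_isEmpty
  show ((Nat.card {κ : V → ℕ // (∀ v w, G.Adj v w → κ v ≠ κ w) ∧
      ∀ c, (Finset.univ.filter (fun v => κ v = c)).card = d c} : ℕ) : ℚ) = _
  rw [key, Nat.cast_sum]
  refine Finset.sum_congr rfl (fun π _ => ?_)
  simp [apply_ite (Nat.cast : ℕ → ℚ)]

section Multipartite

variable {l : List ℕ}

lemma stable_block_const {π : Finpartition (Finset.univ :
      Finset (Σ j : Fin l.length, Fin (l.get j)))}
    (hs : IsStable (multipartite l) π) {b} (hb : b ∈ π.parts)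
    {v w : Σ j : Fin l.length, Fin (l.get j)} (hv : v ∈ b) (hw : w ∈ b) : v.1 = w.1 :=
  not_not.1 (hs b hb v hv w hw)

def colFn (l : List ℕ) (j : Fin l.length) : Finset (Σ j : Fin l.length, Fin (l.get j)) :=
  Finset.univ.filter (fun v => v.1 = j)

lemma mem_colFn {j : Fin l.length} {v : Σ j : Fin l.length, Fin (l.get j)} :
    v ∈ colFn l j ↔ v.1 = j := by simp [colFn]

lemma card_colFn (j : Fin l.length) : (colFn l j).card = l.get j := by
  have e : Fin (l.get j) ≃ {v : Σ j : Fin l.length, Fin (l.get j) // v.1 = j} := by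
    refine Equiv.ofBijective (fun i => ⟨⟨j, i⟩, rfl⟩) ⟨?_, ?_⟩
    · intro i i' h
      have h2 := congrArg Subtype.val h
      rw [Sigma.mk.inj_iff] at h2
      exact eq_of_heq h2.2
    · rintro ⟨⟨j', i⟩, hj⟩
      dsimp only at hj
      subst hj
      exact ⟨i, rfl⟩
  calc (colFn l j).card
      = Fintype.card {v : Σ j : Fin l.length, Fin (l.get j) // v.1 = j} :=
        (Fintype.card_subtype _).symm
    _ = Fintype.card (Fin (l.get j)) := (Fintype.card_congr e).symm
    _ = l.get j := Fintype.card_fin _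

/-- The vertex `⟨j, 0⟩` when column `j` is nonempty. -/
def vtx (l : List ℕ) (hl : ∀ j : Fin l.length, l.get j ≠ 0) (j : Fin l.length) :
    Σ j : Fin l.length, Fin (l.get j) :=
  ⟨j, ⟨0, Nat.pos_of_ne_zero (hl j)⟩⟩

lemma card_univ_sigma : Fintype.card (Σ j : Fin l.length, Fin (l.get j)) = l.sum := by
  rw [Fintype.card_sigma]
  simp only [Fintype.card_fin]
  rw [← List.sum_ofFn, List.ofFn_get]

lemma part_inj (hl : ∀ j : Fin l.length, l.get j ≠ 0)
    {π : Finpartition (Finset.univ : Finset (Σ j : Fin l.length, Fin (l.get j)))}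
    (hs : IsStable (multipartite l) π) :
    Function.Injective
      (fun j => (⟨π.part (vtx l hl j), π.part_mem.2 (Finset.mem_univ _)⟩ :
        {b // b ∈ π.parts})) := by
  intro j j' h
  have h2 : π.part (vtx l hl j) = π.part (vtx l hl j') := congrArg Subtype.val h
  have h3 : vtx l hl j ∈ π.part (vtx l hl j') := h2 ▸ π.mem_part (Finset.mem_univ _)
  exact stable_block_const hs (π.part_mem.2 (Finset.mem_univ (vtx l hl j'))) h3
    (π.mem_part (Finset.mem_univ (vtx l hl j')))

lemma length_le_card_parts (hl : ∀ j : Fin l.length, l.get j ≠ 0)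
    {π : Finpartition (Finset.univ : Finset (Σ j : Fin l.length, Fin (l.get j)))}
    (hs : IsStable (multipartite l) π) :
    l.length ≤ π.parts.card :=
  calc l.length = Fintype.card (Fin l.length) := (Fintype.card_fin _).symm
    _ ≤ Fintype.card {b // b ∈ π.parts} := Fintype.card_le_of_injective _ (part_inj hl hs)
    _ = π.parts.card := Fintype.card_coe _

lemma colFn_injective (hl : ∀ j : Fin l.length, l.get j ≠ 0) :
    Function.Injective (colFn l) := by
  intro j j' h
  have h1 : vtx l hl j ∈ colFn l j := mem_colFn.2 rfl
  rw [h] at h1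
  exact mem_colFn.1 h1

lemma parts_eq_cols (hl : ∀ j : Fin l.length, l.get j ≠ 0)
    {π : Finpartition (Finset.univ : Finset (Σ j : Fin l.length, Fin (l.get j)))}
    (hs : IsStable (multipartite l) π)
    (hcard : π.parts.card = l.length) :
    π.parts = Finset.univ.image (colFn l) := by
  classical
  set f : Fin l.length → {b // b ∈ π.parts} :=
    fun j => ⟨π.part (vtx l hl j), π.part_mem.2 (Finset.mem_univ _)⟩ with hf
  have hcards : Fintype.card (Fin l.length) = Fintype.card {b // b ∈ π.parts} := by
    rw [Fintype.card_coe, hcard, Fintype.card_fin]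
  have hfbij : Function.Bijective f :=
    (Fintype.bijective_iff_injective_and_card f).2 ⟨part_inj hl hs, hcards⟩
  have hchoose : ∀ b : {b // b ∈ π.parts},
      (π.nonempty_of_mem_parts b.2).choose ∈ b.1 :=
    fun b => (π.nonempty_of_mem_parts b.2).choose_spec
  set g : {b // b ∈ π.parts} → Fin l.length :=
    fun b => ((π.nonempty_of_mem_parts b.2).choose).1 with hg
  have hgsurj : Function.Surjective g := by
    intro j
    refine ⟨f j, ?_⟩
    have h1 : vtx l hl j ∈ (f j).1 := π.mem_part (Finset.mem_univ _)
    exact stable_block_const hs (f j).2 (hchoose (f j)) h1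
  have hgbij : Function.Bijective g :=
    (Fintype.bijective_iff_surjective_and_card g).2 ⟨hgsurj, hcards.symm⟩
  have hsub : ∀ b : {b // b ∈ π.parts}, b.1 ⊆ colFn l (g b) := by
    intro b v hv
    exact mem_colFn.2 (stable_block_const hs b.2 hv (hchoose b))
  have hsum : ∑ b : {b // b ∈ π.parts}, b.1.card
      = ∑ b : {b // b ∈ π.parts}, (colFn l (g b)).card := by
    have h1 : ∑ b : {b // b ∈ π.parts}, b.1.card = ∑ i ∈ π.parts, i.card := by
      rw [Finset.univ_eq_attach]
      exact Finset.sum_attach π.parts Finset.card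
    have h2 : ∑ b : {b // b ∈ π.parts}, (colFn l (g b)).card
        = ∑ j : Fin l.length, (colFn l j).card :=
      Fintype.sum_bijective g hgbij _ _ (fun b => rfl)
    rw [h1, h2, π.sum_card_parts, Finset.card_univ, card_univ_sigma]
    simp only [card_colFn]
    rw [← List.sum_ofFn, List.ofFn_get]
  have heach := (Finset.sum_eq_sum_iff_of_le
    (fun b _ => Finset.card_le_card (hsub b))).1 hsum
  have heq : ∀ b : {b // b ∈ π.parts}, b.1 = colFn l (g b) :=
    fun b => Finset.eq_of_subset_of_card_le (hsub b)
      (le_of_eq (heach b (Finset.mem_univ b)).symm)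
  ext b
  rw [Finset.mem_image]
  constructor
  · intro hb
    exact ⟨g ⟨b, hb⟩, Finset.mem_univ _, (heq ⟨b, hb⟩).symm⟩
  · rintro ⟨j, -, rfl⟩
    obtain ⟨b0, rfl⟩ := hgsurj j
    rw [← heq b0]
    exact b0.2

lemma typeOf_eq_of_stable (hl : ∀ j : Fin l.length, l.get j ≠ 0)
    {π : Finpartition (Finset.univ : Finset (Σ j : Fin l.length, Fin (l.get j)))}
    (hs : IsStable (multipartite l) π)
    (hcard : π.parts.card = l.length) :
    typeOf π = (l : Multiset ℕ) := by
  show π.parts.val.map Finset.card = _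
  rw [parts_eq_cols hl hs hcard,
    Finset.image_val_of_injOn ((colFn_injective hl).injOn),
    Multiset.map_map]
  show Multiset.map (fun j => (colFn l j).card) Finset.univ.val = _
  simp only [card_colFn]
  rw [Fin.univ_val_map, List.ofFn_get]

lemma card_typeOf {V : Type} [DecidableEq V] {s : Finset V} (π : Finpartition s) :
    Multiset.card (typeOf π) = π.parts.card := by
  show Multiset.card (π.parts.val.map Finset.card) = _
  rw [Multiset.card_map]
  rfl

end Multipartite

def colPart (l : List ℕ) (hl : ∀ j : Fin l.length, l.get j ≠ 0) :
    Finpartition (Finset.univ : Finset (Σ j : Fin l.length, Fin (l.get j))) where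
  parts := Finset.univ.image (colFn l)
  supIndep := by
    rw [Finset.supIndep_iff_pairwiseDisjoint]
    rintro x hx y hy hxy
    obtain ⟨j, -, rfl⟩ := Finset.mem_image.1 (Finset.mem_coe.1 hx)
    obtain ⟨j', -, rfl⟩ := Finset.mem_image.1 (Finset.mem_coe.1 hy)
    simp only [Function.onFun, id]
    rw [Finset.disjoint_left]
    intro v hv hv'
    exact hxy (by rw [← mem_colFn.1 hv, mem_colFn.1 hv'])
  sup_parts := by
    apply Finset.Subset.antisymm (Finset.subset_univ _)
    intro v _
    rw [Finset.mem_sup]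
    exact ⟨colFn l v.1, Finset.mem_image_of_mem _ (Finset.mem_univ _), mem_colFn.2 rfl⟩
  bot_notMem := by
    rw [Finset.bot_eq_empty, Finset.mem_image]
    rintro ⟨j, -, hj⟩
    have hmem : vtx l hl j ∈ colFn l j := mem_colFn.2 rfl
    rw [hj] at hmem
    exact Finset.notMem_empty _ hmem

lemma isStable_colPart (l : List ℕ) (hl : ∀ j : Fin l.length, l.get j ≠ 0) :
    IsStable (multipartite l) (colPart l hl) := by
  intro b hb v hv w hw hadj
  obtain ⟨j, -, rfl⟩ := Finset.mem_image.1 hb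
  exact hadj ((mem_colFn.1 hv).trans (mem_colFn.1 hw).symm)

lemma card_parts_colPart (l : List ℕ) (hl : ∀ j : Fin l.length, l.get j ≠ 0) :
    (colPart l hl).parts.card = l.length := by
  show (Finset.univ.image (colFn l)).card = _
  rw [Finset.card_image_of_injective _ (colFn_injective hl), Finset.card_univ,
    Fintype.card_fin]

lemma typeOf_colPart (l : List ℕ) (hl : ∀ j : Fin l.length, l.get j ≠ 0) :
    typeOf (colPart l hl) = (l : Multiset ℕ) :=
  typeOf_eq_of_stable hl (isStable_colPart l hl) (card_parts_colPart l hl)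

lemma csf_eval_lt (l : List ℕ) (hl : ∀ j : Fin l.length, l.get j ≠ 0) (d : ℕ →₀ ℕ)
    (h : Multiset.card (expParts d) < l.length) :
    csf (multipartite l) d = 0 := by
  rw [csf_apply]
  refine Finset.sum_eq_zero (fun π _ => ?_)
  rw [if_neg]
  rintro ⟨hs, ht⟩
  rw [ht, card_typeOf] at h
  exact absurd (length_le_card_parts hl hs) (not_le.2 h)

lemma csf_eval_eq (l : List ℕ) (hl : ∀ j : Fin l.length, l.get j ≠ 0) (d : ℕ →₀ ℕ)
    (h : Multiset.card (expParts d) = l.length) :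
    csf (multipartite l) d
      = if expParts d = (l : Multiset ℕ) then (multFact (l : Multiset ℕ) : ℚ) else 0 := by
  rw [csf_apply]
  by_cases hld : expParts d = (l : Multiset ℕ)
  · rw [if_pos hld]
    rw [Finset.sum_eq_single (colPart l hl)]
    · rw [if_pos ⟨isStable_colPart l hl, by rw [typeOf_colPart, hld]⟩, typeOf_colPart]
    · intro π _ hne
      rw [if_neg]
      rintro ⟨hs, ht⟩
      apply hne
      apply Finpartition.ext
      rw [parts_eq_cols hl hs (by rw [← card_typeOf, ← ht, h])]
      rfl
    · intro hmem
      exact absurd (Finset.mem_univ _) hmem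
  · rw [if_neg hld]
    refine Finset.sum_eq_zero (fun π _ => ?_)
    rw [if_neg]
    rintro ⟨hs, ht⟩
    exact hld (ht.trans
      (typeOf_eq_of_stable hl hs (by rw [← card_typeOf, ← ht, h])))

lemma stable_iff_le {l : List ℕ}
    {P π : Finpartition (Finset.univ : Finset (Σ j : Fin l.length, Fin (l.get j)))}
    (hstable : IsStable (multipartite l) P)
    (hmax : ∀ b1 ∈ P.parts, ∀ b2 ∈ P.parts, b1 ≠ b2 →
        ∃ v ∈ b1, ∃ w ∈ b2, (multipartite l).Adj v w) :
    IsStable (multipartite l) π ↔ π ≤ P := by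
  constructor
  · intro hs b hb
    obtain ⟨v, hv⟩ := π.nonempty_of_mem_parts hb
    refine ⟨P.part v, P.part_mem.2 (Finset.mem_univ v), ?_⟩
    intro w hw
    by_contra hwB
    have hne : P.part w ≠ P.part v := fun h => hwB (h ▸ P.mem_part (Finset.mem_univ w))
    obtain ⟨x, hx, y, hy, hadj⟩ := hmax _ (P.part_mem.2 (Finset.mem_univ w)) _
      (P.part_mem.2 (Finset.mem_univ v)) hne
    have h1 : x.1 = w.1 := stable_block_const hstable (P.part_mem.2 (Finset.mem_univ w)) hx
      (P.mem_part (Finset.mem_univ w))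
    have h2 : y.1 = v.1 := stable_block_const hstable (P.part_mem.2 (Finset.mem_univ v)) hy
      (P.mem_part (Finset.mem_univ v))
    have h3 : w.1 = v.1 := stable_block_const hs hb hw hv
    exact hadj (by rw [h1, h2, h3])
  · intro hle b hb v hv w hw
    obtain ⟨c, hc, hbc⟩ := hle hb
    exact hstable c hc v (hbc hv) w (hbc hw)

/-- A canonical monomial with given multiset of exponents. -/
def monoOf (m : Multiset ℕ) : ℕ →₀ ℕ :=
  Finsupp.onFinset (Finset.range m.toList.length)
    (fun i => if h : i < m.toList.length then m.toList.get ⟨i, h⟩ else 0)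
    (fun i hi => by
      rw [Finset.mem_range]
      by_contra h
      exact hi (dif_neg h))

lemma monoOf_apply (m : Multiset ℕ) (i : ℕ) (h : i < m.toList.length) :
    monoOf m i = m.toList.get ⟨i, h⟩ := by
  show (if h : i < m.toList.length then m.toList.get ⟨i, h⟩ else 0) = _
  rw [dif_pos h]

lemma support_monoOf (m : Multiset ℕ) (hm : ∀ i ∈ m, i ≠ 0) :
    (monoOf m).support = Finset.range m.toList.length := by
  apply Finset.Subset.antisymm Finsupp.support_onFinset_subset
  intro i hi
  rw [Finset.mem_range] at hi
  rw [Finsupp.mem_support_iff]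
  show monoOf m i ≠ 0
  rw [monoOf_apply m i hi]
  exact hm _ (Multiset.mem_toList.1 (List.get_mem _ _))

lemma expParts_monoOf (m : Multiset ℕ) (hm : ∀ i ∈ m, i ≠ 0) :
    expParts (monoOf m) = m := by
  show (monoOf m).support.val.map (monoOf m) = m
  rw [support_monoOf m hm]
  have h1 : (Finset.range m.toList.length).val
      = ((List.range m.toList.length : List ℕ) : Multiset ℕ) := rfl
  rw [h1, Multiset.map_coe]
  rw [show List.map (monoOf m) (List.range m.toList.length) = m.toList from ?_,
    Multiset.coe_toList]
  apply List.ext_getElem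
  · simp
  · intro i h1' h2'
    simp only [List.getElem_map, List.getElem_range]
    rw [monoOf_apply m i h2']
    exact List.get_eq_getElem

lemma multFact_pos (m : Multiset ℕ) : 0 < multFact m :=
  Finset.prod_pos (fun j _ => Nat.factorial_pos _)

/-- Lemma 1: for the complete multipartite graph `G_λ` with maximal stable partition `P`
of type `λ`, and any `μ ⊢ n`, the sum over all partitions `π` refining `P` of the
`r_μ`-coefficient of `m̃_{λ(π)}` is the Kronecker delta `δ_{λ,μ}`.  Here the
`r`-expansion coefficients are given by any family `a` with
`m̃_ν = ∑_μ a ν μ • r_μ` (such coefficients are unique since the `r`'s form a basis). -/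
theorem stmt10 (n : ℕ) (lam : Nat.Partition n)
    (P : Finpartition (Finset.univ :
        Finset (Σ j : Fin lam.parts.toList.length, Fin (lam.parts.toList.get j))))
    (hstable : IsStable (multipartite lam.parts.toList) P)
    (hmax : ∀ b1 ∈ P.parts, ∀ b2 ∈ P.parts, b1 ≠ b2 →
        ∃ v ∈ b1, ∃ w ∈ b2, (multipartite lam.parts.toList).Adj v w)
    (htype : typeOf P = lam.parts)
    (a : Multiset ℕ → Nat.Partition n → ℚ)
    (ha : ∀ nu : Nat.Partition n,
        mtilde nu.parts = ∑ mu : Nat.Partition n, a nu.parts mu • rOf mu.parts)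
    (mu : Nat.Partition n) :
    ∑ pi ∈ Finset.univ.filter
        (fun pi : Finpartition (Finset.univ :
            Finset (Σ j : Fin lam.parts.toList.length, Fin (lam.parts.toList.get j))) =>
          pi ≤ P),
      a (typeOf pi) mu = if lam = mu then 1 else 0 := by
  classical
  have hlpos : ∀ j : Fin lam.parts.toList.length, lam.parts.toList.get j ≠ 0 := fun j =>
    (lam.parts_pos (Multiset.mem_toList.1 (List.get_mem _ _))).ne'
  have hn : Fintype.card (Σ j : Fin lam.parts.toList.length,
      Fin (lam.parts.toList.get j)) = n := by
    rw [card_univ_sigma, Multiset.sum_toList, lam.parts_sum]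
  have hpos : ∀ π : Finpartition (Finset.univ : Finset (Σ j : Fin lam.parts.toList.length,
      Fin (lam.parts.toList.get j))), ∀ i ∈ typeOf π, 0 < i := by
    intro π i hi
    obtain ⟨b, hb, rfl⟩ := Multiset.mem_map.1 hi
    exact Finset.card_pos.2 (π.nonempty_of_mem_parts hb)
  have hsumt : ∀ π : Finpartition (Finset.univ : Finset (Σ j : Fin lam.parts.toList.length,
      Fin (lam.parts.toList.get j))), (typeOf π).sum = n := by
    intro π
    show (π.parts.val.map Finset.card).sum = n
    have h1 : (π.parts.val.map Finset.card).sum = ∑ i ∈ π.parts, i.card := rfl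
    rw [h1, π.sum_card_parts, Finset.card_univ, hn]
  have hsum_app : ∀ {X : Type} (s : Finset X) (f : X → MvPowerSeries ℕ ℚ) (d : ℕ →₀ ℕ),
      (∑ x ∈ s, f x) d = ∑ x ∈ s, f x d := by
    intro X s f d
    induction s using Finset.cons_induction with
    | empty => rfl
    | cons x s hx ih => rw [Finset.sum_cons, Finset.sum_cons, ← ih]; rfl
  have hsmul_app : ∀ (q : ℚ) (f : MvPowerSeries ℕ ℚ) (d : ℕ →₀ ℕ), (q • f) d = q * f d :=
    fun q f d => rfl
  set C : Nat.Partition n → ℚ :=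
    fun ν => ∑ pi ∈ Finset.univ.filter
      (fun pi : Finpartition (Finset.univ :
          Finset (Σ j : Fin lam.parts.toList.length, Fin (lam.parts.toList.get j))) =>
        pi ≤ P), a (typeOf pi) ν with hC
  have key : ∀ d : ℕ →₀ ℕ, csf (multipartite lam.parts.toList) d
      = ∑ ν : Nat.Partition n, C ν * csf (multipartite ν.parts.toList) d := by
    intro d
    have h1 : csf (multipartite lam.parts.toList) d
        = ∑ pi ∈ Finset.univ.filter
            (fun pi : Finpartition (Finset.univ :
                Finset (Σ j : Fin lam.parts.toList.length, Fin (lam.parts.toList.get j))) =>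
              pi ≤ P), mtilde (typeOf pi) d := by
      rw [csf_apply, Finset.sum_filter]
      refine Finset.sum_congr rfl (fun π _ => ?_)
      have hiff := stable_iff_le (π := π) hstable hmax
      by_cases hle : π ≤ P
      · have hs : IsStable (multipartite lam.parts.toList) π := hiff.2 hle
        rw [if_pos hle]
        show _ = if expParts d = typeOf π then ((multFact (typeOf π) : ℕ) : ℚ) else 0
        by_cases ht : expParts d = typeOf π
        · rw [if_pos ⟨hs, ht⟩, if_pos ht]
        · rw [if_neg (fun hc => ht hc.2), if_neg ht]
      · rw [if_neg hle, if_neg (fun hc => hle (hiff.1 hc.1))]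
    rw [h1]
    have h2 : ∀ pi ∈ Finset.univ.filter
        (fun pi : Finpartition (Finset.univ :
            Finset (Σ j : Fin lam.parts.toList.length, Fin (lam.parts.toList.get j))) =>
          pi ≤ P),
        mtilde (typeOf pi) d
          = ∑ ν : Nat.Partition n, a (typeOf pi) ν * csf (multipartite ν.parts.toList) d := by
      intro pi _
      have hb : mtilde (typeOf pi) d
          = (∑ mu : Nat.Partition n, a (typeOf pi) mu • rOf mu.parts) d :=
        congrFun (ha ⟨typeOf pi, fun {i} hi => hpos pi i hi, hsumt pi⟩) d
      rw [hb, hsum_app]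
      exact Finset.sum_congr rfl (fun ν _ => hsmul_app _ _ d)
    rw [Finset.sum_congr rfl h2, Finset.sum_comm]
    exact Finset.sum_congr rfl (fun ν _ => (Finset.sum_mul _ _ _).symm)
  have hlnu : ∀ ν : Nat.Partition n, ∀ j : Fin ν.parts.toList.length,
      ν.parts.toList.get j ≠ 0 := fun ν j =>
    (ν.parts_pos (Multiset.mem_toList.1 (List.get_mem _ _))).ne'
  have hlen : ∀ ν : Nat.Partition n, ν.parts.toList.length = Multiset.card ν.parts :=
    fun ν => Multiset.length_toList _
  have hF : ∀ ν : Nat.Partition n, (multFact ν.parts : ℚ) ≠ 0 :=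
    fun ν => Nat.cast_ne_zero.2 (multFact_pos ν.parts).ne'
  have main : ∀ m : ℕ, ∀ μ0 : Nat.Partition n, Multiset.card μ0.parts = m →
      C μ0 = if lam = μ0 then 1 else 0 := by
    intro m
    induction m using Nat.strong_induction_on with
    | _ m IH =>
    intro μ0 hm0
    have hd : expParts (monoOf μ0.parts) = μ0.parts :=
      expParts_monoOf _ (fun i hi => (μ0.parts_pos hi).ne')
    set d := monoOf μ0.parts with hdd
    have hcard_d : Multiset.card (expParts d) = m := by rw [hd, hm0]
    have hval_lt : ∀ ν : Nat.Partition n, m < Multiset.card ν.parts →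
        csf (multipartite ν.parts.toList) d = 0 := by
      intro ν hν
      exact csf_eval_lt _ (hlnu ν) d (by rw [hcard_d, hlen ν]; exact hν)
    have hval_eq : ∀ ν : Nat.Partition n, Multiset.card ν.parts = m →
        csf (multipartite ν.parts.toList) d
          = if ν = μ0 then (multFact μ0.parts : ℚ) else 0 := by
      intro ν hν
      have h := csf_eval_eq _ (hlnu ν) d (by rw [hcard_d, hlen ν, hν])
      rw [Multiset.coe_toList] at h
      rw [h, hd]
      by_cases hh : ν = μ0
      · rw [if_pos (by rw [hh]), if_pos hh, hh]
      · rw [if_neg (fun hcc => hh (Nat.Partition.ext hcc.symm)), if_neg hh]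
    have hkey := key d
    have hterm : ∀ ν : Nat.Partition n,
        C ν * csf (multipartite ν.parts.toList) d
        = (if ν = μ0 then C μ0 * (multFact μ0.parts : ℚ) else 0)
          + (if lam = ν then
              (if Multiset.card ν.parts < m then csf (multipartite ν.parts.toList) d else 0)
            else 0) := by
      intro ν
      rcases lt_trichotomy (Multiset.card ν.parts) m with hlt | heq | hgt
      · have hCν := IH _ hlt ν rfl
        have hne : ν ≠ μ0 := fun h => by rw [h, hm0] at hlt; exact lt_irrefl _ hlt
        rw [hCν, if_neg hne, zero_add]
        by_cases hl0 : lam = ν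
        · rw [if_pos hl0, if_pos hl0, if_pos hlt, one_mul]
        · rw [if_neg hl0, if_neg hl0, zero_mul]
      · have hval := hval_eq ν heq
        have hnlt : ¬ Multiset.card ν.parts < m := by rw [heq]; exact lt_irrefl m
        rw [hval, if_neg hnlt, ite_self, add_zero]
        by_cases hh : ν = μ0
        · rw [if_pos hh, if_pos hh, hh]
        · rw [if_neg hh, if_neg hh, mul_zero]
      · have h0 := hval_lt ν hgt
        have hne : ν ≠ μ0 := fun h => by
          rw [h, hm0] at hgt; exact lt_irrefl _ hgt
        have hnlt : ¬ Multiset.card ν.parts < m := not_lt.2 hgt.le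
        rw [h0, mul_zero, if_neg hne, if_neg hnlt, ite_self, add_zero]
    rw [Finset.sum_congr rfl (fun ν _ => hterm ν), Finset.sum_add_distrib] at hkey
    have hs1 : ∑ ν : Nat.Partition n,
        (if ν = μ0 then C μ0 * (multFact μ0.parts : ℚ) else 0)
        = C μ0 * (multFact μ0.parts : ℚ) := by
      rw [Finset.sum_ite_eq' Finset.univ μ0 (fun _ => C μ0 * (multFact μ0.parts : ℚ))]
      rw [if_pos (Finset.mem_univ μ0)]
    have hs2 : ∑ ν : Nat.Partition n,
        (if lam = ν then
          (if Multiset.card ν.parts < m then csf (multipartite ν.parts.toList) d else 0)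
          else 0)
        = (if Multiset.card lam.parts < m then csf (multipartite lam.parts.toList) d
            else 0) := by
      rw [Finset.sum_ite_eq Finset.univ lam
        (fun ν => if Multiset.card ν.parts < m then csf (multipartite ν.parts.toList) d else 0)]
      rw [if_pos (Finset.mem_univ lam)]
    rw [hs1, hs2] at hkey
    by_cases hlt : Multiset.card lam.parts < m
    · have hne : lam ≠ μ0 := fun h => by rw [h, hm0] at hlt; exact lt_irrefl _ hlt
      rw [if_pos hlt] at hkey
      have h0 : C μ0 * (multFact μ0.parts : ℚ) = 0 := by linarith
      rw [if_neg hne]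
      exact (mul_eq_zero.1 h0).resolve_right (hF μ0)
    · rw [if_neg hlt, add_zero] at hkey
      rcases eq_or_lt_of_le (not_lt.1 hlt) with heq | hgt
      · have hval := hval_eq lam heq.symm
        rw [hval] at hkey
        by_cases hh : lam = μ0
        · rw [if_pos hh] at hkey
          rw [if_pos hh]
          have h1 : C μ0 * (multFact μ0.parts : ℚ) = 1 * (multFact μ0.parts : ℚ) := by
            rw [one_mul]; exact hkey.symm
          exact mul_right_cancel₀ (hF μ0) h1
        · rw [if_neg hh] at hkey
          rw [if_neg hh]
          exact ((mul_eq_zero.1 hkey.symm).resolve_right (hF μ0))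
      · have h0 := hval_lt lam hgt
        rw [h0] at hkey
        have hne : lam ≠ μ0 := fun h => by rw [h, hm0] at hgt; exact lt_irrefl _ hgt
        rw [if_neg hne]
        exact ((mul_eq_zero.1 hkey.symm).resolve_right (hF μ0))
  exact main _ mu rfl
end
end

section
/- For any simple graph G with maximal stable partitions M_1,...,M_k, the chromatic symmetric function satisfies X_G = ∑_{∅ ≠ S ⊆ [k]} (-1)^{|S|-1} r_{λ(∧_{i∈S} M_i)}. -/
open Finset
open scoped Classical

noncomputable section

/-- A maximal stable partition: blocks are independent sets and there is an edge
between every pair of distinct blocks. -/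
def IsMaximalStable {V : Type} [Fintype V] [DecidableEq V] (G : SimpleGraph V)
    (P : Finpartition (Finset.univ : Finset V)) : Prop :=
  IsStable G P ∧ ∀ b1 ∈ P.parts, ∀ b2 ∈ P.parts, b1 ≠ b2 →
    ∃ v ∈ b1, ∃ w ∈ b2, G.Adj v w

/-! ### Auxiliary lemmas -/

section Aux

variable {V : Type} [Fintype V] [DecidableEq V]

lemma aux_part_inf (P Q : Finpartition (univ : Finset V)) (v : V) :
    (P ⊓ Q).part v = P.part v ∩ Q.part v := by
  have hv : v ∈ (univ : Finset V) := mem_univ v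
  have hmem : P.part v ∩ Q.part v ∈ (P ⊓ Q).parts := by
    rw [Finpartition.parts_inf]
    refine mem_erase.2 ⟨?_, mem_image.2 ⟨(P.part v, Q.part v),
      mem_product.2 ⟨P.part_mem.2 hv, Q.part_mem.2 hv⟩, rfl⟩⟩
    have : v ∈ P.part v ∩ Q.part v := mem_inter.2 ⟨P.mem_part hv, Q.mem_part hv⟩
    simp only [bot_eq_empty, ne_eq]
    exact fun h => by simp [h] at this
  exact (P ⊓ Q).part_eq_of_mem hmem (mem_inter.2 ⟨P.mem_part hv, Q.mem_part hv⟩)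

lemma aux_mem_part_inf' {ι : Type*} (t : Finset ι) (ht : t.Nonempty)
    (M : ι → Finpartition (univ : Finset V)) (v w : V) :
    w ∈ (t.inf' ht M).part v ↔ ∀ i ∈ t, w ∈ (M i).part v := by
  induction ht using Finset.Nonempty.cons_induction with
  | singleton i => simp
  | cons a s ha hs ih => rw [Finset.inf'_cons (H := hs), aux_part_inf]; simp [ih]

lemma aux_part_mono {P Q : Finpartition (univ : Finset V)} (h : P ≤ Q) (v : V) :
    P.part v ⊆ Q.part v := by
  obtain ⟨c, hc, hbc⟩ := h (P.part_mem.2 (mem_univ v))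
  have : c = Q.part v := (Q.part_eq_of_mem hc (hbc (P.mem_part (mem_univ v)))).symm
  exact this ▸ hbc

/-- Merging two blocks of a finpartition. -/
def mergeParts (Q : Finpartition (univ : Finset V)) (b1 b2 : Finset V)
    (h1 : b1 ∈ Q.parts) (h2 : b2 ∈ Q.parts) (hne : b1 ≠ b2) :
    Finpartition (univ : Finset V) where
  parts := insert (b1 ∪ b2) ((Q.parts.erase b1).erase b2)
  supIndep := by
    rw [Finset.supIndep_iff_pairwiseDisjoint]
    have hpd := Q.supIndep.pairwiseDisjoint
    intro x hx y hy hxy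
    simp only [coe_insert, Set.mem_insert_iff, mem_coe, mem_erase] at hx hy
    rcases hx with rfl | ⟨hx2, hx1, hx⟩
    · rcases hy with rfl | ⟨hy2, hy1, hy⟩
      · exact absurd rfl hxy
      · simp only [Function.onFun, id_eq, Finset.disjoint_union_left]
        exact ⟨hpd h1 hy (Ne.symm hy1), hpd h2 hy (Ne.symm hy2)⟩
    · rcases hy with rfl | ⟨hy2, hy1, hy⟩
      · simp only [Function.onFun, id_eq, Finset.disjoint_union_right]
        exact ⟨hpd hx h1 hx1, hpd hx h2 hx2⟩
      · exact hpd hx hy hxy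
  sup_parts := by
    have hrw : Q.parts = insert b1 (insert b2 ((Q.parts.erase b1).erase b2)) := by
      rw [insert_erase (mem_erase.2 ⟨Ne.symm hne, h2⟩), insert_erase h1]
    have h := Q.sup_parts
    rw [hrw, sup_insert, sup_insert] at h
    rw [sup_insert]
    have hx : id (b1 ∪ b2) ⊔ ((Q.parts.erase b1).erase b2).sup id
        = id b1 ⊔ (id b2 ⊔ ((Q.parts.erase b1).erase b2).sup id) := by
      simp only [id_eq, Finset.sup_eq_union, Finset.union_assoc]
    rw [hx]
    exact h
  bot_notMem := by
    simp only [bot_eq_empty, mem_insert]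
    rintro (h | h)
    · have hb1 := Q.nonempty_of_mem_parts h1
      have he : b1 = ∅ := by
        have h' := h.symm
        rw [Finset.union_eq_empty] at h'
        exact h'.1
      simp [he] at hb1
    · exact Q.bot_notMem (mem_of_mem_erase (mem_of_mem_erase h))

lemma le_mergeParts (Q : Finpartition (univ : Finset V)) (b1 b2 : Finset V)
    (h1 : b1 ∈ Q.parts) (h2 : b2 ∈ Q.parts) (hne : b1 ≠ b2) :
    Q ≤ mergeParts Q b1 b2 h1 h2 hne := by
  intro b hb
  by_cases hb1 : b = b1
  · exact ⟨b1 ∪ b2, mem_insert_self _ _, hb1 ▸ subset_union_left⟩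
  by_cases hb2 : b = b2
  · exact ⟨b1 ∪ b2, mem_insert_self _ _, hb2 ▸ subset_union_right⟩
  · exact ⟨b, mem_insert_of_mem (mem_erase.2 ⟨hb2, mem_erase.2 ⟨hb1, hb⟩⟩), le_rfl⟩

lemma mergeParts_card (Q : Finpartition (univ : Finset V)) (b1 b2 : Finset V)
    (h1 : b1 ∈ Q.parts) (h2 : b2 ∈ Q.parts) (hne : b1 ≠ b2) :
    (mergeParts Q b1 b2 h1 h2 hne).parts.card < Q.parts.card := by
  have hpd := Q.supIndep.pairwiseDisjoint
  have hnotmem : b1 ∪ b2 ∉ (Q.parts.erase b1).erase b2 := by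
    intro h
    have hmem : b1 ∪ b2 ∈ Q.parts := mem_of_mem_erase (mem_of_mem_erase h)
    have hne1 : b1 ∪ b2 ≠ b1 := (mem_erase.1 (mem_of_mem_erase h)).1
    have hd : Disjoint b1 (b1 ∪ b2) := hpd h1 hmem (Ne.symm hne1)
    obtain ⟨v, hv⟩ := Q.nonempty_of_mem_parts h1
    exact Finset.disjoint_left.1 hd hv (Finset.mem_union_left _ hv)
  have hcard2 : 2 ≤ Q.parts.card := Finset.one_lt_card.2 ⟨b1, h1, b2, h2, hne⟩
  have hb2' : b2 ∈ Q.parts.erase b1 := mem_erase.2 ⟨Ne.symm hne, h2⟩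
  have hc : ((Q.parts.erase b1).erase b2).card = Q.parts.card - 2 := by
    rw [card_erase_of_mem hb2', card_erase_of_mem h1]
    omega
  show (insert (b1 ∪ b2) ((Q.parts.erase b1).erase b2)).card < Q.parts.card
  rw [card_insert_of_notMem hnotmem, hc]
  omega

lemma mergeParts_stable {G : SimpleGraph V} (Q : Finpartition (univ : Finset V))
    (b1 b2 : Finset V) (h1 : b1 ∈ Q.parts) (h2 : b2 ∈ Q.parts) (hne : b1 ≠ b2)
    (hst : IsStable G Q) (hno : ¬ ∃ v ∈ b1, ∃ w ∈ b2, G.Adj v w) :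
    IsStable G (mergeParts Q b1 b2 h1 h2 hne) := by
  intro b hb v hv w hw
  push_neg at hno
  rcases mem_insert.1 hb with rfl | hb'
  · rcases mem_union.1 hv with hv1 | hv2 <;> rcases mem_union.1 hw with hw1 | hw2
    · exact hst b1 h1 v hv1 w hw1
    · exact hno v hv1 w hw2
    · intro hadj; exact hno w hw1 v hv2 hadj.symm
    · exact hst b2 h2 v hv2 w hw2
  · exact hst b (mem_of_mem_erase (mem_of_mem_erase hb')) v hv w hw

lemma exists_max_coarsening (G : SimpleGraph V) :
    ∀ n (Q : Finpartition (univ : Finset V)), Q.parts.card ≤ n → IsStable G Q →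
      ∃ P, IsMaximalStable G P ∧ Q ≤ P := by
  intro n
  induction n with
  | zero =>
    intro Q hc hst
    refine ⟨Q, ⟨hst, ?_⟩, le_rfl⟩
    intro b1 hb1
    simp only [Nat.le_zero, Finset.card_eq_zero] at hc
    simp [hc] at hb1
  | succ n ih =>
    intro Q hc hst
    by_cases hmax : IsMaximalStable G Q
    · exact ⟨Q, hmax, le_rfl⟩
    · have : ∃ b1 ∈ Q.parts, ∃ b2 ∈ Q.parts, b1 ≠ b2 ∧ ¬ ∃ v ∈ b1, ∃ w ∈ b2, G.Adj v w := by
        by_contra hcon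
        push_neg at hcon
        exact hmax ⟨hst, fun b1 hb1 b2 hb2 hne => by
          have := hcon b1 hb1 b2 hb2
          tauto⟩
      obtain ⟨b1, h1, b2, h2, hne, hno⟩ := this
      obtain ⟨P, hP, hle⟩ := ih (mergeParts Q b1 b2 h1 h2 hne)
        (by have := mergeParts_card Q b1 b2 h1 h2 hne; omega)
        (mergeParts_stable Q b1 b2 h1 h2 hne hst hno)
      exact ⟨P, hP, le_trans (le_mergeParts Q b1 b2 h1 h2 hne) hle⟩

lemma exists_list_map {α β : Type*} (l : List β) (f : α → β) :
    ∀ (m : Multiset α), m.map f = ↑l → ∃ ps : List α, (↑ps : Multiset α) = m ∧ ps.map f = l := by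
  induction l with
  | nil =>
    intro m h
    refine ⟨[], ?_, rfl⟩
    have : m = 0 := by
      simpa [Multiset.map_eq_zero] using h
    simp [this]
  | cons a l ih =>
    intro m h
    have ha : a ∈ m.map f := by rw [h]; exact Multiset.mem_coe.2 List.mem_cons_self
    obtain ⟨b, hb, hfb⟩ := Multiset.mem_map.1 ha
    have hm : m = b ::ₘ m.erase b := (Multiset.cons_erase hb).symm
    have h2 : (m.erase b).map f = ↑l := by
      rw [hm, Multiset.map_cons, hfb] at h
      have : (a ::ₘ (m.erase b).map f) = a ::ₘ (↑l : Multiset β) := by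
        rw [h]; rfl
      exact (Multiset.cons_inj_right a).1 this
    obtain ⟨ps, hps, hmap⟩ := ih (m.erase b) h2
    refine ⟨b :: ps, ?_, by simp [hmap, hfb]⟩
    show b ::ₘ (↑ps : Multiset α) = m
    rw [hps, ← hm]

/-- Key: the coefficient of `rOf (typeOf P)` counts colorings of `V` whose color classes
refine `P`. -/
lemma rOf_coeff (P : Finpartition (univ : Finset V)) (d : ℕ →₀ ℕ) :
    rOf (typeOf P) d = (Nat.card {κ : V → ℕ // (∀ v w, κ v = κ w → w ∈ P.part v) ∧
      ∀ c, (Finset.univ.filter (fun v => κ v = c)).card = d c} : ℚ) := by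
  set l : List ℕ := (typeOf P).toList with hl
  have hml : (P.parts.val.map Finset.card) = ↑l := (Multiset.coe_toList _).symm
  obtain ⟨ps, hps, hmap⟩ := exists_list_map l Finset.card P.parts.val hml
  have hlen : l.length = ps.length := by rw [← hmap, List.length_map]
  have hnodup : ps.Nodup := by
    have := P.parts.nodup
    rwa [← hps, Multiset.coe_nodup] at this
  have hmem : ∀ j : Fin ps.length, ps.get j ∈ P.parts := by
    intro j
    have : ps.get j ∈ (↑ps : Multiset (Finset V)) :=
      Multiset.mem_coe.2 (by simpa using List.get_mem ps j.1 j.2)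
    rw [hps] at this
    exact this
  have hcard : ∀ j : Fin l.length, l.get j = (ps.get (Fin.cast hlen j)).card := by
    intro j
    rw [List.get_of_eq hmap.symm j]
    simp
  have fEquiv : ∀ j : Fin l.length, Fin (l.get j) ≃ ↥(ps.get (Fin.cast hlen j)) := by
    intro j
    apply Fintype.equivOfCardEq
    simpa [List.get_eq_getElem] using hcard j
  let E1 : (Σ j : Fin l.length, Fin (l.get j)) ≃ (Σ j : Fin ps.length, ↥(ps.get j)) :=
    Equiv.sigmaCongr (finCongr hlen) fEquiv
  have hE1 : ∀ x, (E1 x).1 = Fin.cast hlen x.1 := by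
    rintro ⟨j, i⟩; rfl
  let f2 : (Σ j : Fin ps.length, ↥(ps.get j)) → V := fun x => ↑x.2
  have hpd := P.supIndep.pairwiseDisjoint
  have f2inj : Function.Injective f2 := by
    rintro ⟨j, v, hv⟩ ⟨j', w, hw⟩ h
    simp only [f2] at h
    subst h
    have hjj : j = j' := by
      by_contra hne
      have hgetne : ps.get j ≠ ps.get j' := fun h => hne (List.nodup_iff_injective_get.1 hnodup h)
      have hd : Disjoint (ps.get j) (ps.get j') := hpd (hmem j) (hmem j') hgetne
      exact Finset.disjoint_left.1 hd hv hw
    subst hjj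
    rfl
  have f2surj : Function.Surjective f2 := by
    intro v
    have hvp : v ∈ P.part v := P.mem_part (mem_univ v)
    have : P.part v ∈ (↑ps : Multiset (Finset V)) := by rw [hps]; exact P.part_mem.2 (mem_univ v)
    obtain ⟨j, hj⟩ := List.mem_iff_get.1 (Multiset.mem_coe.1 this)
    exact ⟨⟨j, ⟨v, hj ▸ hvp⟩⟩, rfl⟩
  let E2 : (Σ j : Fin ps.length, ↥(ps.get j)) ≃ V := Equiv.ofBijective f2 ⟨f2inj, f2surj⟩
  have hE2 : ∀ x, P.part (E2 x) = ps.get x.1 := by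
    rintro ⟨j, v, hv⟩
    exact P.part_eq_of_mem (hmem j) hv
  let Φ : (Σ j : Fin l.length, Fin (l.get j)) ≃ V := E1.trans E2
  have hΦ : ∀ x y, (P.part (Φ x) = P.part (Φ y)) ↔ x.1 = y.1 := by
    intro x y
    have h1 : P.part (Φ x) = ps.get (Fin.cast hlen x.1) := by
      show P.part (E2 (E1 x)) = _
      rw [hE2, hE1]
    have h2 : P.part (Φ y) = ps.get (Fin.cast hlen y.1) := by
      show P.part (E2 (E1 y)) = _
      rw [hE2, hE1]
    rw [h1, h2]
    constructor
    · intro h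
      have := List.nodup_iff_injective_get.1 hnodup h
      simpa [Fin.ext_iff] using this
    · intro h; rw [show (Fin.cast hlen x.1) = Fin.cast hlen y.1 by simp [Fin.ext_iff, h]]
  show ((Nat.card _ : ℕ) : ℚ) = _
  congr 1
  apply Nat.card_congr
  refine Equiv.symm ⟨fun κ => ⟨κ.1 ∘ Φ, ?_, ?_⟩, fun κ' => ⟨κ'.1 ∘ Φ.symm, ?_, ?_⟩, ?_, ?_⟩
  · rintro x y hadj hxy
    have hmem' : Φ y ∈ P.part (Φ x) := κ.2.1 _ _ hxy
    have : P.part (Φ x) = P.part (Φ y) :=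
      ((P.mem_part_iff_part_eq_part (mem_univ (Φ y)) (mem_univ (Φ x))).1 hmem').symm
    exact hadj ((hΦ x y).1 this)
  · intro c
    rw [← κ.2.2 c, ← Fintype.card_subtype, ← Fintype.card_subtype]
    exact Fintype.card_congr (Φ.subtypeEquiv (fun x => Iff.rfl))
  · intro v w hvw
    by_cases hfst : (Φ.symm v).1 = (Φ.symm w).1
    · have : P.part (Φ (Φ.symm v)) = P.part (Φ (Φ.symm w)) := (hΦ _ _).2 hfst
      rw [Equiv.apply_symm_apply, Equiv.apply_symm_apply] at this
      rw [this]
      exact P.mem_part (mem_univ w)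
    · exact absurd hvw (κ'.2.1 _ _ hfst)
  · intro c
    rw [← κ'.2.2 c, ← Fintype.card_subtype, ← Fintype.card_subtype]
    exact Fintype.card_congr (Φ.symm.subtypeEquiv (fun x => Iff.rfl))
  · intro κ'
    apply Subtype.ext
    funext x
    simp
  · intro κ
    apply Subtype.ext
    funext v
    simp

/-- The usage condition on a coloring. -/
def Usage (d : ℕ →₀ ℕ) (κ : V → ℕ) : Prop :=
  ∀ c, (Finset.univ.filter (fun v => κ v = c)).card = d c

/-- An ambient finset containing all colorings with usage `d`. -/
def Amb (d : ℕ →₀ ℕ) : Finset (V → ℕ) :=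
  (Finset.univ : Finset (V → {c : ℕ // c ∈ d.support})).image (fun f v => (f v : ℕ))

lemma mem_Amb_of_usage {d : ℕ →₀ ℕ} {κ : V → ℕ} (h : Usage d κ) : κ ∈ Amb d := by
  refine mem_image.2 ⟨fun v => ⟨κ v, ?_⟩, mem_univ _, rfl⟩
  rw [Finsupp.mem_support_iff, ← h (κ v)]
  have : v ∈ Finset.univ.filter (fun w => κ w = κ v) := mem_filter.2 ⟨mem_univ _, rfl⟩
  intro hc
  rw [Finset.card_eq_zero] at hc
  simp [hc] at this

/-- The finset of all colorings with usage `d`. -/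
def UU (d : ℕ →₀ ℕ) : Finset (V → ℕ) := (Amb d).filter (Usage d)

lemma mem_UU {d : ℕ →₀ ℕ} {κ : V → ℕ} : κ ∈ UU d ↔ Usage d κ :=
  ⟨fun h => (mem_filter.1 h).2, fun h => mem_filter.2 ⟨mem_Amb_of_usage h, h⟩⟩

lemma natCard_eq (d : ℕ →₀ ℕ) (p : (V → ℕ) → Prop) [DecidablePred p] :
    Nat.card {κ : V → ℕ // p κ ∧ Usage d κ} = ((UU d).filter p).card := by
  rw [← Nat.card_eq_finsetCard]
  apply Nat.card_congr
  exact Equiv.subtypeEquivRight (fun κ => by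
    simp only [mem_filter, mem_UU]
    tauto)

lemma mem_inf'_A {k : ℕ} (d : ℕ →₀ ℕ) (M : Fin k → Finpartition (univ : Finset V))
    (t : Finset (Fin k)) (ht : t.Nonempty) (κ : V → ℕ) :
    κ ∈ t.inf' ht (fun i => (UU d).filter
        (fun κ => ∀ v w : V, κ v = κ w → w ∈ (M i).part v)) ↔
      κ ∈ UU d ∧ ∀ i ∈ t, ∀ v w : V, κ v = κ w → w ∈ (M i).part v := by
  induction ht using Finset.Nonempty.cons_induction with
  | singleton i => simp [mem_filter]
  | cons a s ha hs ih =>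
    rw [Finset.inf'_cons (H := hs), Finset.inf_eq_inter, mem_inter, mem_filter, ih]
    constructor
    · rintro ⟨⟨h1, h2⟩, h3, h4⟩
      refine ⟨h1, fun i hi => ?_⟩
      rcases mem_cons.1 hi with rfl | hi
      exacts [h2, h4 i hi]
    · rintro ⟨h1, h2⟩
      exact ⟨⟨h1, h2 a (mem_cons_self a s)⟩, h1, fun i hi => h2 i (mem_cons_of_mem hi)⟩

end Aux

/-- If `M_1,…,M_k` are the maximal stable partitions of `G`, then
`X_G = ∑_{∅ ≠ S ⊆ [k]} (-1)^{|S|-1} r_{λ(∧_{i∈S} M_i)}`. -/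
theorem stmt11 {V : Type} [Fintype V] [DecidableEq V] (G : SimpleGraph V)
    (k : ℕ) (M : Fin k → Finpartition (Finset.univ : Finset V))
    (hinj : Function.Injective M)
    (hall : ∀ P, IsMaximalStable G P ↔ ∃ i, M i = P) :
    csf G = ∑ S : {S : Finset (Fin k) // S.Nonempty},
      ((-1 : ℚ) ^ ((S : Finset (Fin k)).card - 1)) •
        rOf (typeOf ((S : Finset (Fin k)).inf' S.2 M)) := by
  apply MvPowerSeries.ext
  intro d
  rw [map_sum]
  simp only [LinearMap.map_smul, MvPowerSeries.coeff_apply]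
  -- abbreviations
  set A : Fin k → Finset (V → ℕ) := fun i => (UU d).filter
    (fun κ => ∀ v w : V, κ v = κ w → w ∈ ((M i).part v)) with hA
  -- Step 1: the LHS counts proper colorings with usage d, as a finset card
  have hL : csf G d = ((((UU d).filter
      (fun κ => ∀ v w : V, G.Adj v w → κ v ≠ κ w)).card : ℕ) : ℚ) := by
    have : csf G d = ((Nat.card {κ : V → ℕ // (∀ v w, G.Adj v w → κ v ≠ κ w) ∧
        Usage d κ} : ℕ) : ℚ) := rfl
    rw [this, natCard_eq]
  -- Step 2: the proper colorings are exactly the union of the A i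
  have hcover : (UU d).filter (fun κ => ∀ v w : V, G.Adj v w → κ v ≠ κ w)
      = Finset.univ.biUnion A := by
    ext κ
    simp only [mem_filter, mem_biUnion, mem_univ, true_and, hA]
    constructor
    · rintro ⟨hU, hproper⟩
      -- build the color-class partition and coarsen it
      set Q : Finpartition (univ : Finset V) := Finpartition.ofSetoid (Setoid.ker κ) with hQ
      have hQpart : ∀ v w : V, w ∈ Q.part v ↔ κ v = κ w := by
        intro v w
        rw [hQ, Finpartition.mem_part_ofSetoid_iff_rel]
        exact Setoid.ker_def
      have hQst : IsStable G Q := by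
        intro b hb v hv w hw hadj
        have hbv : b = Q.part v := (Q.part_eq_of_mem hb hv).symm
        have : κ v = κ w := (hQpart v w).1 (hbv ▸ hw)
        exact hproper v w hadj this
      obtain ⟨P, hPmax, hle⟩ := exists_max_coarsening G Q.parts.card Q le_rfl hQst
      obtain ⟨i, rfl⟩ := (hall P).1 hPmax
      refine ⟨i, hU, fun v w hvw => ?_⟩
      exact aux_part_mono hle v ((hQpart v w).2 hvw)
    · rintro ⟨i, hU, href⟩
      refine ⟨hU, fun v w hadj hvw => ?_⟩
      have hPmax : IsMaximalStable G (M i) := (hall (M i)).2 ⟨i, rfl⟩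
      have hwv : w ∈ (M i).part v := href v w hvw
      exact hPmax.1 ((M i).part v) ((M i).part_mem.2 (mem_univ v)) v
        ((M i).mem_part (mem_univ v)) w hwv hadj
  -- Step 3: inclusion-exclusion
  have hIE := Finset.inclusion_exclusion_card_biUnion (Finset.univ : Finset (Fin k)) A
  -- Step 4: rewrite each term
  have hterm : ∀ (t : Finset (Fin k)) (ht : t.Nonempty),
      ((t.inf' ht A).card : ℚ) = rOf (typeOf (t.inf' ht M)) d := by
    intro t ht
    have h2 : (t.inf' ht A).card = Nat.card {κ : V → ℕ //
        (∀ v w, κ v = κ w → w ∈ (t.inf' ht M).part v) ∧ Usage d κ} := by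
      rw [natCard_eq]
      congr 1
      ext κ
      rw [mem_filter, mem_inf'_A d M t ht κ]
      constructor
      · rintro ⟨hU, href⟩
        exact ⟨hU, fun v w hvw => (aux_mem_part_inf' t ht M v w).2 (fun i hi => href i hi v w hvw)⟩
      · rintro ⟨hU, href⟩
        exact ⟨hU, fun i hi v w hvw => (aux_mem_part_inf' t ht M v w).1 (href v w hvw) i hi⟩
    rw [rOf_coeff]
    norm_cast
  -- Step 5: reindex the sum and fix signs
  rw [hL, hcover]
  have hIEQ : ((Finset.univ.biUnion A).card : ℚ) =
      ∑ t : ((Finset.univ : Finset (Fin k)).powerset.filter (·.Nonempty) : Finset (Finset (Fin k))),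
        (-1 : ℚ) ^ ((t : Finset (Fin k)).card + 1) *
          (((t : Finset (Fin k)).inf' (mem_filter.1 t.2).2 A).card : ℚ) := by
    exact_mod_cast hIE
  rw [hIEQ]
  refine Fintype.sum_equiv (Equiv.subtypeEquivRight (fun S : Finset (Fin k) => by simp)) _ _ ?_
  intro t
  have ht : (t : Finset (Fin k)).Nonempty := (mem_filter.1 t.2).2
  have hn : 1 ≤ (t : Finset (Fin k)).card := Finset.card_pos.2 ht
  rw [hterm _ ht, smul_eq_mul]
  congr 1
  rw [show (t : Finset (Fin k)).card + 1 = ((t : Finset (Fin k)).card - 1) + 2 by omega, pow_add]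
  norm_num
end
end

section
/- For every partition π of V(G) with e(π) ≤ j (at most j edges inside blocks), there exists an i-maximal partition M of V(G) with i ≤ j such that π refines M. -/
open Finset
open scoped Classical

noncomputable section

/-- The number of edges of `G` with both endpoints in the same block of `π`. -/
def eInside {V : Type} [Fintype V] [DecidableEq V] (G : SimpleGraph V)
    (P : Finpartition (Finset.univ : Finset V)) : ℕ :=
  Nat.card {ed : Sym2 V // ed ∈ G.edgeSet ∧ ∃ b ∈ P.parts, ∀ v ∈ ed, v ∈ b}

/-- A partition is `i`-maximal if it has exactly `i` edges inside blocks and there is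
at least one edge between every pair of distinct blocks. -/
def IsIMaximal {V : Type} [Fintype V] [DecidableEq V] (G : SimpleGraph V)
    (P : Finpartition (Finset.univ : Finset V)) (i : ℕ) : Prop :=
  eInside G P = i ∧ ∀ b1 ∈ P.parts, ∀ b2 ∈ P.parts, b1 ≠ b2 →
    ∃ v ∈ b1, ∃ w ∈ b2, G.Adj v w

/-- The Tutte symmetric function `XB_G = ∑_{π ⊢ V(G)} (1+t)^{e(π)} m̃_{λ(π)}`,
as a polynomial in `t` with symmetric-function coefficients. -/
def tutteXB {V : Type} [Fintype V] [DecidableEq V] (G : SimpleGraph V) :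
    Polynomial (MvPowerSeries ℕ ℚ) :=
  ∑ P : Finpartition (Finset.univ : Finset V),
    (1 + Polynomial.X) ^ (eInside G P) * Polynomial.C (mtilde (typeOf P))


/-- Merge two parts of a finpartition. -/
def mergeFP {V : Type} [DecidableEq V] {s : Finset V} (P : Finpartition s)
    (b1 b2 : Finset V) (h1 : b1 ∈ P.parts) (h2 : b2 ∈ P.parts) : Finpartition s where
  parts := insert (b1 ∪ b2) (P.parts \ {b1, b2})
  supIndep := by
    rw [Finset.supIndep_iff_pairwiseDisjoint]
    have hdisj := P.disjoint
    intro x hx y hy hxy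
    simp only [Finset.coe_insert, Set.mem_insert_iff, Finset.mem_coe, Finset.mem_sdiff,
      Finset.mem_insert, Finset.mem_singleton, not_or] at hx hy
    rcases hx with rfl | ⟨hx, hx1, hx2⟩
    · rcases hy with rfl | ⟨hy, hy1, hy2⟩
      · exact absurd rfl hxy
      · exact Finset.disjoint_union_left.2
          ⟨hdisj h1 hy (fun e => hy1 e.symm), hdisj h2 hy (fun e => hy2 e.symm)⟩
    · rcases hy with rfl | ⟨hy, hy1, hy2⟩
      · exact Finset.disjoint_union_right.2 ⟨hdisj hx h1 hx1, hdisj hx h2 hx2⟩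
      · exact hdisj hx hy hxy
  sup_parts := by
    apply le_antisymm
    · apply Finset.sup_le
      intro b hb
      rcases Finset.mem_insert.mp hb with rfl | hb
      · exact Finset.union_subset (P.le h1) (P.le h2)
      · exact P.le (Finset.mem_sdiff.mp hb).1
    · intro v hv
      obtain ⟨b, hb, hvb⟩ := P.exists_mem hv
      have : b ⊆ Finset.sup (insert (b1 ∪ b2) (P.parts \ {b1, b2})) id := by
        have hins := Finset.le_sup (f := id) (Finset.mem_insert_self (b1 ∪ b2) (P.parts \ {b1, b2}))
        by_cases e1 : b = b1
        · have hb' : b ⊆ b1 ∪ b2 := e1 ▸ Finset.subset_union_left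
          exact hb'.trans hins
        by_cases e2 : b = b2
        · have hb' : b ⊆ b1 ∪ b2 := e2 ▸ Finset.subset_union_right
          exact hb'.trans hins
        · exact Finset.le_sup (f := id) (Finset.mem_insert_of_mem
            (Finset.mem_sdiff.mpr ⟨hb, by
              rintro hmem
              rcases Finset.mem_insert.mp hmem with h | h
              · exact e1 h
              · exact e2 (Finset.mem_singleton.mp h)⟩))
      exact this hvb
  bot_notMem := by
    intro hmem
    rcases Finset.mem_insert.mp hmem with he | he
    · obtain ⟨v, hv⟩ := P.nonempty_of_mem_parts h1
      have : v ∈ (⊥ : Finset V) := he ▸ Finset.mem_union_left _ hv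
      simp at this
    · exact P.bot_notMem (Finset.mem_sdiff.mp he).1

/-- Every partition `π` of `V(G)` with at most `j` edges inside blocks refines some
`i`-maximal partition with `i ≤ j`. -/
theorem stmt13 {V : Type} [Fintype V] [DecidableEq V] (G : SimpleGraph V)
    (j : ℕ) (P : Finpartition (Finset.univ : Finset V)) (h : eInside G P ≤ j) :
    ∃ (M : Finpartition (Finset.univ : Finset V)) (i : ℕ),
      i ≤ j ∧ IsIMaximal G M i ∧ P ≤ M := by
  classical
  suffices H : ∀ n (M : Finpartition (Finset.univ : Finset V)), M.parts.card ≤ n → P ≤ M →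
      eInside G M ≤ j → ∃ M' i, i ≤ j ∧ IsIMaximal G M' i ∧ P ≤ M' from
    H P.parts.card P le_rfl le_rfl h
  intro n
  induction n with
  | zero =>
    intro M hc hle hE
    refine ⟨M, eInside G M, hE, ⟨rfl, ?_⟩, hle⟩
    intro b1 hb1
    rw [Nat.le_zero, Finset.card_eq_zero] at hc
    rw [hc] at hb1
    exact absurd hb1 (Finset.notMem_empty _)
  | succ n ih =>
    intro M hc hle hE
    by_cases hmax : ∀ b1 ∈ M.parts, ∀ b2 ∈ M.parts, b1 ≠ b2 → ∃ v ∈ b1, ∃ w ∈ b2, G.Adj v w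
    · exact ⟨M, eInside G M, hE, ⟨rfl, hmax⟩, hle⟩
    push_neg at hmax
    obtain ⟨b1, hb1, b2, hb2, hne, hno⟩ := hmax
    set M' := mergeFP M b1 b2 hb1 hb2 with hM'
    have hparts : M'.parts = insert (b1 ∪ b2) (M.parts \ {b1, b2}) := rfl
    have hMM' : M ≤ M' := by
      intro b hb
      by_cases e1 : b = b1
      · exact ⟨b1 ∪ b2, hparts ▸ Finset.mem_insert_self _ _, e1 ▸ Finset.subset_union_left⟩
      by_cases e2 : b = b2
      · exact ⟨b1 ∪ b2, hparts ▸ Finset.mem_insert_self _ _, e2 ▸ Finset.subset_union_right⟩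
      · exact ⟨b, hparts ▸ Finset.mem_insert_of_mem
          (Finset.mem_sdiff.mpr ⟨hb, by simp [e1, e2]⟩), subset_rfl⟩
    have hsub : ({b1, b2} : Finset (Finset V)) ⊆ M.parts := by
      intro x hx
      rcases Finset.mem_insert.mp hx with rfl | hx
      · exact hb1
      · exact Finset.mem_singleton.mp hx ▸ hb2
    have hcard : M'.parts.card ≤ n := by
      have h1 : M'.parts.card ≤ (M.parts \ {b1, b2}).card + 1 := by
        rw [hparts]; exact Finset.card_insert_le _ _
      have h2 : (M.parts \ {b1, b2}).card = M.parts.card - 2 := by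
        rw [Finset.card_sdiff_of_subset hsub, Finset.card_insert_of_notMem (by simp [hne]),
          Finset.card_singleton]
      have h3 : 2 ≤ M.parts.card := by
        have : ({b1, b2} : Finset (Finset V)).card = 2 := by
          rw [Finset.card_insert_of_notMem (by simp [hne]), Finset.card_singleton]
        calc 2 = ({b1, b2} : Finset (Finset V)).card := this.symm
        _ ≤ M.parts.card := Finset.card_le_card hsub
      omega
    have key : ∀ ed, ed ∈ G.edgeSet → (∃ b ∈ M'.parts, ∀ v ∈ ed, v ∈ b) →
        ∃ b ∈ M.parts, ∀ v ∈ ed, v ∈ b := by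
      intro ed
      induction ed using Sym2.ind with
      | _ x y =>
        intro hed hb
        rw [SimpleGraph.mem_edgeSet] at hed
        obtain ⟨b, hb, hin⟩ := hb
        have hx : x ∈ b := hin x (by simp)
        have hy : y ∈ b := hin y (by simp)
        rw [hparts] at hb
        rcases Finset.mem_insert.mp hb with rfl | hb
        · rcases Finset.mem_union.mp hx with hx' | hx' <;>
            rcases Finset.mem_union.mp hy with hy' | hy'
          · refine ⟨b1, hb1, fun v hv => ?_⟩
            rcases Sym2.mem_iff.mp hv with rfl | rfl
            · exact hx'
            · exact hy'
          · exact absurd hed (hno x hx' y hy')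
          · exact absurd hed.symm (hno y hy' x hx')
          · refine ⟨b2, hb2, fun v hv => ?_⟩
            rcases Sym2.mem_iff.mp hv with rfl | rfl
            · exact hx'
            · exact hy'
        · exact ⟨b, (Finset.mem_sdiff.mp hb).1, hin⟩
    have hE' : eInside G M' ≤ eInside G M := by
      unfold eInside
      exact Nat.card_le_card_of_injective
        (fun e => ⟨e.1, e.2.1, key e.1 e.2.1 e.2.2⟩)
        (fun a b hab => Subtype.ext (congrArg (fun x => x.1) hab))
    exact ih M' hcard (le_trans hle hMM') (le_trans hE' hE)
end
end

section
/- For every partition μ of n: ∑_{λ⊢n} (1/∏_i n_i(λ)!) ∑_{puzzles μ→λ} ∏_i ((l(μ^i)-1)!/∏_j n_j(μ^i)!) = l(μ)!/∏_i n_i(μ)!. -/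
open Finset
open scoped Classical

noncomputable section

namespace Aux

/-- product of binomial coefficients of counts -/
def pc (s t : Multiset ℕ) : ℕ := ∏ j ∈ t.toFinset, (s.count j).choose (t.count j)

lemma pc_eq_prod (s t : Multiset ℕ) (F : Finset ℕ) (hF : t.toFinset ⊆ F) :
    pc s t = ∏ j ∈ F, (s.count j).choose (t.count j) := by
  rw [pc]
  refine (Finset.prod_subset hF fun x _ hx => ?_)
  rw [show Multiset.count x t = 0 from Multiset.count_eq_zero_of_notMem (by simpa using hx),
    Nat.choose_zero_right]

lemma count_powerset (s t : Multiset ℕ) : s.powerset.count t = pc s t := by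
  induction s using Multiset.induction generalizing t with
  | empty =>
    rw [Multiset.powerset_zero]
    by_cases h : t = 0
    · subst h; simp [pc]
    · rw [Multiset.count_singleton, if_neg h]
      obtain ⟨j, hj⟩ := Multiset.exists_mem_of_ne_zero h
      refine (Finset.prod_eq_zero (Multiset.mem_toFinset.2 hj) ?_).symm
      rw [Multiset.count_zero, Nat.choose_eq_zero_of_lt (by simpa using Multiset.count_pos.2 hj)]
  | cons a s ih =>
    rw [Multiset.powerset_cons, Multiset.count_add, ih, Multiset.count_map]
    by_cases ha : a ∈ t
    · have key : (Multiset.filter (fun x => t = a ::ₘ x) s.powerset).card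
          = s.powerset.count (t.erase a) := by
        rw [Multiset.count, Multiset.countP_eq_card_filter]
        congr 1
        apply Multiset.filter_congr
        intro x _
        constructor
        · rintro rfl; rw [Multiset.erase_cons_head]
        · rintro rfl; exact (Multiset.cons_erase ha).symm
      rw [key, ih]
      have haf : a ∈ t.toFinset := Multiset.mem_toFinset.2 ha
      have hsub : (t.erase a).toFinset ⊆ t.toFinset := by
        intro x hx
        simp only [Multiset.mem_toFinset] at hx ⊢
        exact Multiset.mem_of_mem_erase hx
      rw [pc_eq_prod s (t.erase a) t.toFinset hsub, pc, pc]
      rw [← Finset.prod_erase_mul _ _ haf, ← Finset.prod_erase_mul _ _ haf,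
          ← Finset.prod_erase_mul _ _ haf]
      have hrest : ∀ x ∈ t.toFinset.erase a,
          ((a ::ₘ s).count x).choose (t.count x) = (s.count x).choose (t.count x) ∧
          (s.count x).choose ((t.erase a).count x) = (s.count x).choose (t.count x) := by
        intro x hx
        have hxa : x ≠ a := Finset.ne_of_mem_erase hx
        rw [Multiset.count_cons_of_ne hxa, Multiset.count_erase_of_ne hxa]
        exact ⟨rfl, rfl⟩
      have h1 : ∏ x ∈ t.toFinset.erase a, ((a ::ₘ s).count x).choose (t.count x)
          = ∏ x ∈ t.toFinset.erase a, (s.count x).choose (t.count x) :=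
        Finset.prod_congr rfl fun x hx => (hrest x hx).1
      have h2 : ∏ x ∈ t.toFinset.erase a, (s.count x).choose ((t.erase a).count x)
          = ∏ x ∈ t.toFinset.erase a, (s.count x).choose (t.count x) :=
        Finset.prod_congr rfl fun x hx => (hrest x hx).2
      rw [h1, h2, ← mul_add]
      congr 1
      rw [Multiset.count_cons_self, Multiset.count_erase_self]
      obtain ⟨m, hm⟩ : ∃ m, Multiset.count a t = m + 1 :=
        ⟨Multiset.count a t - 1, by
          have := Multiset.count_pos.2 ha; omega⟩
      rw [hm]
      simp [Nat.choose_succ_succ, Nat.add_comm]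
    · have key : (Multiset.filter (fun x => t = a ::ₘ x) s.powerset).card = 0 := by
        rw [Multiset.card_eq_zero, Multiset.filter_eq_nil]
        rintro x _ rfl
        exact ha (Multiset.mem_cons_self a x)
      rw [key, add_zero, pc, pc]
      refine Finset.prod_congr rfl fun x hx => ?_
      have : x ≠ a := by rintro rfl; exact ha (Multiset.mem_toFinset.1 hx)
      rw [Multiset.count_cons_of_ne this]


lemma count_powersetCard (s t : Multiset ℕ) :
    (s.powersetCard (Multiset.card t)).count t = s.powerset.count t := by
  rw [← Multiset.bind_powerset_len s]
  have hb : Multiset.count t ((Multiset.range (Multiset.card s + 1)).bind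
      fun k => s.powersetCard k)
      = ∑ k ∈ Finset.range (Multiset.card s + 1), Multiset.count t (s.powersetCard k) := by
    rw [Multiset.count_bind]; rfl
  rw [hb]
  by_cases h : Multiset.card t ≤ Multiset.card s
  · have hmem : Multiset.card t ∈ Finset.range (Multiset.card s + 1) :=
      Finset.mem_range.2 (by omega)
    refine (Finset.sum_eq_single_of_mem (f := fun k => Multiset.count t (s.powersetCard k)) (Multiset.card t) hmem ?_).symm
    intro k _ hk
    refine Multiset.count_eq_zero_of_notMem fun hmem => ?_
    exact hk ((Multiset.mem_powersetCard.1 hmem).2).symm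
  · have h1 : ∀ k, Multiset.count t (s.powersetCard k) = 0 := fun k =>
      Multiset.count_eq_zero_of_notMem fun hmem => by
        have h2 := (Multiset.mem_powersetCard.1 hmem).1
        have := Multiset.card_le_card h2
        omega
    simp [h1]

lemma sum_pc (s : Multiset ℕ) (a : ℕ) :
    ∑ ν ∈ s.powerset.toFinset.filter (fun ν => Multiset.card ν = a), pc s ν
      = (Multiset.card s).choose a := by
  rw [← Multiset.card_powersetCard a s, ← Multiset.toFinset_sum_count_eq]
  refine Finset.sum_congr ?_ ?_
  · ext ν
    simp only [Finset.mem_filter, Multiset.mem_toFinset, Multiset.mem_powersetCard,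
      Multiset.mem_powerset]
  · intro ν hν
    have hcard : Multiset.card ν = a := (Multiset.mem_powersetCard.1
      (Multiset.mem_toFinset.1 hν)).2
    rw [← count_powerset, ← count_powersetCard, hcard]


lemma multFact_eq_prod (m : Multiset ℕ) (F : Finset ℕ) (hF : m.toFinset ⊆ F) :
    multFact m = ∏ j ∈ F, (m.count j).factorial := by
  refine Finset.prod_subset hF fun x _ hx => ?_
  rw [show Multiset.count x m = 0 from Multiset.count_eq_zero_of_notMem (by simpa using hx)]
  rfl

lemma multFact_pos (m : Multiset ℕ) : 0 < multFact m :=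
  Finset.prod_pos fun j _ => Nat.factorial_pos _

lemma multFact_ne_zero (m : Multiset ℕ) : (multFact m : ℚ) ≠ 0 := by
  exact_mod_cast (multFact_pos m).ne'

lemma toFinset_subset_of_le {ν μ : Multiset ℕ} (h : ν ≤ μ) : ν.toFinset ⊆ μ.toFinset := by
  intro x hx
  simp only [Multiset.mem_toFinset] at hx ⊢
  exact Multiset.mem_of_le h hx

lemma multFact_mul (ν μ : Multiset ℕ) (h : ν ≤ μ) :
    multFact ν * multFact (μ - ν) * pc μ ν = multFact μ := by
  have h2 : (μ - ν).toFinset ⊆ μ.toFinset :=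
    toFinset_subset_of_le (Multiset.sub_le_self _ _)
  rw [multFact_eq_prod ν μ.toFinset (toFinset_subset_of_le h),
      multFact_eq_prod (μ - ν) μ.toFinset h2,
      pc_eq_prod μ ν μ.toFinset (toFinset_subset_of_le h),
      multFact, ← Finset.prod_mul_distrib, ← Finset.prod_mul_distrib]
  refine Finset.prod_congr rfl fun j _ => ?_
  have hle : Multiset.count j ν ≤ Multiset.count j μ := Multiset.count_le_of_le j h
  rw [Multiset.count_sub]
  calc (Multiset.count j ν).factorial * (Multiset.count j μ - Multiset.count j ν).factorial
        * (Multiset.count j μ).choose (Multiset.count j ν)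
      = (Multiset.count j μ).choose (Multiset.count j ν) * (Multiset.count j ν).factorial
        * (Multiset.count j μ - Multiset.count j ν).factorial := by ring
    _ = (Multiset.count j μ).factorial := Nat.choose_mul_factorial_mul_factorial hle

/-- weight of a "cycle" -/
def qw (m : Multiset ℕ) : ℚ := ((Multiset.card m - 1).factorial : ℚ) / multFact m

/-- weight of a "composition" -/
def qc (m : Multiset ℕ) : ℚ := ((Multiset.card m).factorial : ℚ) / multFact m

lemma qc_zero : qc 0 = 1 := by simp [qc, multFact]

lemma card_mul_qw (m : Multiset ℕ) (hm : m ≠ 0) :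
    (Multiset.card m : ℚ) * qw m = qc m := by
  have h : 0 < Multiset.card m := Multiset.card_pos.2 hm
  rw [qw, qc, mul_div_assoc']
  congr 1
  rw [← Nat.cast_mul, Nat.mul_factorial_pred h.ne']

lemma conv (μ : Multiset ℕ) :
    ∑ ν ∈ μ.powerset.toFinset, qc ν * qc (μ - ν)
      = ((Multiset.card μ : ℚ) + 1) * qc μ := by
  have hmap : ∀ ν ∈ μ.powerset.toFinset,
      Multiset.card ν ∈ Finset.range (Multiset.card μ + 1) := by
    intro ν hν
    have : ν ≤ μ := Multiset.mem_powerset.1 (Multiset.mem_toFinset.1 hν)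
    exact Finset.mem_range.2 (Nat.lt_succ_of_le (Multiset.card_le_card this))
  rw [← Finset.sum_fiberwise_of_maps_to hmap (fun ν => qc ν * qc (μ - ν))]
  have inner : ∀ a ∈ Finset.range (Multiset.card μ + 1),
      ∑ ν ∈ μ.powerset.toFinset.filter (fun ν => Multiset.card ν = a),
        qc ν * qc (μ - ν) = qc μ := by
    intro a ha
    have ha' : a ≤ Multiset.card μ := Nat.lt_succ_iff.1 (Finset.mem_range.1 ha)
    have step : ∀ ν ∈ μ.powerset.toFinset.filter (fun ν => Multiset.card ν = a),
        qc ν * qc (μ - ν)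
          = ((a.factorial * (Multiset.card μ - a).factorial : ℕ) : ℚ) * (pc μ ν : ℚ)
              / (multFact μ : ℚ) := by
      intro ν hν
      obtain ⟨hν1, hν2⟩ := Finset.mem_filter.1 hν
      have hle : ν ≤ μ := Multiset.mem_powerset.1 (Multiset.mem_toFinset.1 hν1)
      have hcards : Multiset.card (μ - ν) = Multiset.card μ - a := by
        rw [← hν2]
        rw [Multiset.card_sub hle]
      have hmf : (multFact ν : ℚ) * (multFact (μ - ν) : ℚ) * (pc μ ν : ℚ)
          = (multFact μ : ℚ) := by exact_mod_cast multFact_mul ν μ hle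
      have h1 := multFact_ne_zero ν
      have h2 := multFact_ne_zero (μ - ν)
      have h3 := multFact_ne_zero μ
      rw [qc, qc, hν2, hcards]
      field_simp
      push_cast
      rw [← hmf]
      ring
    rw [Finset.sum_congr rfl step, ← Finset.sum_div, ← Finset.mul_sum,
        ← Nat.cast_sum, sum_pc, ← Nat.cast_mul, qc]
    congr 2
    calc a.factorial * (Multiset.card μ - a).factorial * (Multiset.card μ).choose a
        = (Multiset.card μ).choose a * a.factorial * (Multiset.card μ - a).factorial := by ring
      _ = (Multiset.card μ).factorial := Nat.choose_mul_factorial_mul_factorial ha'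
  rw [Finset.sum_congr rfl inner, Finset.sum_const, Finset.card_range, nsmul_eq_mul]
  push_cast
  ring


lemma qw_def (m : Multiset ℕ) :
    qw m = ((Multiset.card m - 1).factorial : ℚ) / (multFact m : ℚ) := rfl

lemma qc_def (m : Multiset ℕ) :
    qc m = ((Multiset.card m).factorial : ℚ) / (multFact m : ℚ) := rfl

/-- tuples of nonempty multisets summing to μ -/
def tup (k : ℕ) (μ : Multiset ℕ) : Finset (Fin k → Multiset ℕ) :=
  (Fintype.piFinset fun _ => μ.powerset.toFinset).filter
    (fun g => (∑ i, g i) = μ ∧ ∀ i, g i ≠ 0)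

lemma mem_tup {k : ℕ} {μ : Multiset ℕ} {g : Fin k → Multiset ℕ} :
    g ∈ tup k μ ↔ (∑ i, g i) = μ ∧ ∀ i, g i ≠ 0 := by
  rw [tup, Finset.mem_filter, and_iff_right_iff_imp]
  rintro ⟨hsum, -⟩
  rw [Fintype.mem_piFinset]
  intro i
  rw [Multiset.mem_toFinset, Multiset.mem_powerset, ← hsum]
  exact Finset.single_le_sum (f := g) (fun j _ => Multiset.zero_le _) (Finset.mem_univ i)

def T (k : ℕ) (μ : Multiset ℕ) : ℚ := ∑ g ∈ tup k μ, ∏ i, qw (g i)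

def F (μ : Multiset ℕ) : ℚ :=
  ∑ k ∈ Finset.range (Multiset.card μ + 1), (1 / (k.factorial : ℚ)) * T k μ

lemma card_finsum {ι : Type*} (s : Finset ι) (f : ι → Multiset ℕ) :
    Multiset.card (∑ i ∈ s, f i) = ∑ i ∈ s, Multiset.card (f i) := by
  classical
  induction s using Finset.induction with
  | empty => simp
  | insert _ _ h ih => rw [Finset.sum_insert h, Finset.sum_insert h, Multiset.card_add, ih]

lemma T_zero_left (μ : Multiset ℕ) (hμ : μ ≠ 0) : T 0 μ = 0 := by
  rw [T, Finset.sum_eq_zero]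
  intro g hg
  exfalso
  exact hμ (by rw [← (mem_tup.1 hg).1]; simp)

lemma T_zero_zero : T 0 0 = 1 := by
  have h : tup 0 (0 : Multiset ℕ) = {fun i => i.elim0} := by
    ext g
    rw [mem_tup]
    constructor
    · intro _
      rw [Finset.mem_singleton]
      funext i
      exact i.elim0
    · intro _
      exact ⟨by simp, fun i => i.elim0⟩
  rw [T, h, Finset.sum_singleton]
  simp

lemma T_vanish (k : ℕ) (μ : Multiset ℕ) (h : Multiset.card μ < k) : T k μ = 0 := by
  rw [T, Finset.sum_eq_zero]
  intro g hg
  obtain ⟨hsum, hne⟩ := mem_tup.1 hg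
  exfalso
  have hge : ∀ i, 1 ≤ Multiset.card (g i) := fun i =>
    Multiset.card_pos.2 (hne i)
  have : Multiset.card μ = ∑ i, Multiset.card (g i) := by
    rw [← hsum, card_finsum]
  have hk : (k : ℕ) ≤ ∑ i : Fin k, Multiset.card (g i) := by
    calc (k : ℕ) = ∑ _i : Fin k, 1 := by simp
      _ ≤ _ := Finset.sum_le_sum fun i _ => hge i
  omega

lemma tup_comp_perm {k : ℕ} {μ : Multiset ℕ} (σ : Equiv.Perm (Fin k))
    {g : Fin k → Multiset ℕ} (hg : g ∈ tup k μ) : g ∘ σ ∈ tup k μ := by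
  rw [mem_tup] at hg ⊢
  exact ⟨by rw [← hg.1]; exact Equiv.sum_comp σ g, fun i => hg.2 (σ i)⟩

lemma prod_erase_zero {k : ℕ} (f : Fin (k + 1) → ℚ) :
    ∏ j ∈ Finset.univ.erase 0, f j = ∏ j : Fin k, f j.succ := by
  refine Finset.prod_bij' (i := fun j hj => j.pred (Finset.mem_erase.1 hj).1)
    (j := fun j _ => j.succ) ?_ ?_ ?_ ?_ ?_ <;>
    simp [Fin.succ_ne_zero, Fin.succ_pred, Fin.pred_succ]

lemma pointing (μ : Multiset ℕ) (k : ℕ) :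
    (Multiset.card μ : ℚ) * T (k + 1) μ
      = ((k : ℚ) + 1) * ∑ ν ∈ μ.powerset.toFinset.erase 0, qc ν * T k (μ - ν) := by
  -- step 1: expand
  have h1 : (Multiset.card μ : ℚ) * T (k + 1) μ
      = ∑ i : Fin (k + 1), ∑ g ∈ tup (k + 1) μ,
          qc (g i) * ∏ j ∈ Finset.univ.erase i, qw (g j) := by
    rw [T, Finset.mul_sum, Finset.sum_comm]
    refine Finset.sum_congr rfl fun g hg => ?_
    obtain ⟨hsum, hne⟩ := mem_tup.1 hg
    have hcard : (Multiset.card μ : ℚ) = ∑ i : Fin (k + 1), (Multiset.card (g i) : ℚ) := by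
      rw [← hsum, card_finsum]
      push_cast
      rfl
    rw [hcard, Finset.sum_mul]
    refine Finset.sum_congr rfl fun i _ => ?_
    rw [← Finset.mul_prod_erase _ _ (Finset.mem_univ i), ← mul_assoc,
      card_mul_qw _ (hne i)]
  -- step 2: symmetry
  have sym : ∀ i : Fin (k + 1),
      (∑ g ∈ tup (k + 1) μ, qc (g i) * ∏ j ∈ Finset.univ.erase i, qw (g j))
        = ∑ g ∈ tup (k + 1) μ, qc (g 0) * ∏ j ∈ Finset.univ.erase 0, qw (g j) := by
    intro i
    refine Finset.sum_nbij' (fun g => g ∘ (Equiv.swap (0 : Fin (k+1)) i))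
      (fun g => g ∘ (Equiv.swap (0 : Fin (k+1)) i))
      (fun g hg => tup_comp_perm _ hg) (fun g hg => tup_comp_perm _ hg)
      (fun g _ => by
        funext j
        simp [Function.comp, Equiv.swap_apply_self])
      (fun g _ => by
        funext j
        simp [Function.comp, Equiv.swap_apply_self])
      (fun g _ => ?_)
    have h0 : g (Equiv.swap (0 : Fin (k+1)) i 0) = g i := by
      rw [Equiv.swap_apply_left]
    rw [Function.comp_apply, h0]
    congr 1
    refine Finset.prod_equiv (Equiv.swap (0 : Fin (k+1)) i) ?_ ?_
    · intro j
      simp only [Finset.mem_erase, Finset.mem_univ, and_true]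
      have hiff : (Equiv.swap (0 : Fin (k+1)) i) j = 0 ↔ j = i := by
        rw [Equiv.swap_apply_eq_iff, Equiv.swap_apply_left]
      exact not_congr hiff.symm
    · intro j _
      rw [Function.comp_apply, Equiv.swap_apply_self]
  -- step 3: decompose at 0
  have dec : (∑ g ∈ tup (k + 1) μ, qc (g 0) * ∏ j ∈ Finset.univ.erase 0, qw (g j))
      = ∑ ν ∈ μ.powerset.toFinset.erase 0, qc ν * T k (μ - ν) := by
    have expand : ∑ ν ∈ μ.powerset.toFinset.erase 0, qc ν * T k (μ - ν)
        = ∑ p ∈ (μ.powerset.toFinset.erase 0).sigma (fun ν => tup k (μ - ν)),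
            qc p.1 * ∏ j : Fin k, qw (p.2 j) := by
      rw [Finset.sum_sigma]
      refine Finset.sum_congr rfl fun ν _ => ?_
      rw [T, Finset.mul_sum]
    rw [expand]
    refine Finset.sum_nbij' (fun g => ⟨g 0, fun j => g j.succ⟩)
      (fun p => Fin.cons p.1 p.2) ?_ ?_ ?_ ?_ ?_
    · intro g hg
      obtain ⟨hsum, hne⟩ := mem_tup.1 hg
      have hsum' : g 0 + ∑ j : Fin k, g j.succ = μ := by
        rw [← hsum, Fin.sum_univ_succ]
      rw [Finset.mem_sigma]
      constructor
      · rw [Finset.mem_erase, Multiset.mem_toFinset, Multiset.mem_powerset]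
        refine ⟨hne 0, ?_⟩
        rw [← hsum]
        exact Finset.single_le_sum (f := g) (fun j _ => Multiset.zero_le _) (Finset.mem_univ 0)
      · rw [mem_tup]
        refine ⟨?_, fun j => hne j.succ⟩
        rw [← hsum']
        exact (add_tsub_cancel_left _ _).symm
    · rintro ⟨ν, g'⟩ hp
      rw [Finset.mem_sigma] at hp
      obtain ⟨hν, hg'⟩ := hp
      rw [Finset.mem_erase, Multiset.mem_toFinset, Multiset.mem_powerset] at hν
      obtain ⟨hsum', hne'⟩ := mem_tup.1 hg'
      rw [mem_tup]
      constructor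
      · rw [Fin.sum_univ_succ]
        simp only [Fin.cons_zero, Fin.cons_succ]
        rw [hsum']
        exact add_tsub_cancel_of_le hν.2
      · intro i
        refine Fin.cases ?_ ?_ i
        · simpa using hν.1
        · intro j
          simpa using hne' j
    · intro g _
      exact Fin.cons_self_tail g
    · rintro ⟨ν, g'⟩ _
      simp
    · intro g _
      dsimp only
      rw [prod_erase_zero (fun j => qw (g j))]
  rw [h1, Finset.sum_congr rfl (fun i _ => sym i), Finset.sum_const, Finset.card_univ,
    Fintype.card_fin, nsmul_eq_mul, dec]
  push_cast
  ring


lemma F_eq_qc (μ : Multiset ℕ) : F μ = qc μ := by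
  generalize hn : Multiset.card μ = n
  induction n using Nat.strong_induction_on generalizing μ with
  | _ n ih =>
  by_cases hμ : μ = 0
  · subst hμ
    rw [F]
    simp [T_zero_zero, qc_zero]
  · have hl : 0 < Multiset.card μ := Multiset.card_pos.2 hμ
    subst hn
    -- key computation
    have key : (Multiset.card μ : ℚ) * F μ = (Multiset.card μ : ℚ) * qc μ := by
      have expand : (Multiset.card μ : ℚ) * F μ
          = ∑ k ∈ Finset.range (Multiset.card μ + 1),
              (1 / (k.factorial : ℚ)) * ((Multiset.card μ : ℚ) * T k μ) := by
        rw [F, Finset.mul_sum]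
        refine Finset.sum_congr rfl fun k _ => by ring
      rw [expand, Finset.sum_range_succ']
      rw [T_zero_left μ hμ, mul_zero, mul_zero, add_zero]
      have step1 : ∀ k ∈ Finset.range (Multiset.card μ),
          (1 / ((k+1).factorial : ℚ)) * ((Multiset.card μ : ℚ) * T (k+1) μ)
            = ∑ ν ∈ μ.powerset.toFinset.erase 0,
                qc ν * ((1 / (k.factorial : ℚ)) * T k (μ - ν)) := by
        intro k _
        rw [pointing, Finset.mul_sum]
        rw [Finset.mul_sum]
        refine Finset.sum_congr rfl fun ν _ => ?_
        have hfac : ((k+1).factorial : ℚ) = ((k : ℚ) + 1) * (k.factorial : ℚ) := by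
          rw [Nat.factorial_succ]; push_cast; ring
        have hne : ((k : ℚ) + 1) ≠ 0 := by positivity
        have hfne : ((k.factorial : ℚ)) ≠ 0 := by
          exact_mod_cast (Nat.factorial_pos k).ne'
        field_simp [hfac]
        rw [hfac]
        ring
      rw [Finset.sum_congr rfl step1, Finset.sum_comm]
      have inner : ∀ ν ∈ μ.powerset.toFinset.erase 0,
          ∑ k ∈ Finset.range (Multiset.card μ),
              qc ν * ((1 / (k.factorial : ℚ)) * T k (μ - ν))
            = qc ν * qc (μ - ν) := by
        intro ν hν
        obtain ⟨hν0, hνmem⟩ := Finset.mem_erase.1 hν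
        have hle : ν ≤ μ := Multiset.mem_powerset.1 (Multiset.mem_toFinset.1 hνmem)
        have hνpos : 0 < Multiset.card ν := Multiset.card_pos.2 hν0
        have hcard : Multiset.card (μ - ν) < Multiset.card μ := by
          rw [Multiset.card_sub hle]
          have := Multiset.card_le_card hle
          omega
        rw [← Finset.mul_sum]
        congr 1
        have hF : F (μ - ν) = qc (μ - ν) := ih _ hcard _ rfl
        rw [← hF, F]
        refine (Finset.sum_subset ?_ ?_).symm
        · intro k hk
          rw [Finset.mem_range] at hk ⊢
          omega
        · intro k _ hk
          rw [Finset.mem_range] at hk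
          rw [T_vanish k (μ - ν) (by omega), mul_zero]
      rw [Finset.sum_congr rfl inner]
      have := conv μ
      have h0mem : (0 : Multiset ℕ) ∈ μ.powerset.toFinset := by
        rw [Multiset.mem_toFinset, Multiset.mem_powerset]
        exact Multiset.zero_le μ
      rw [← Finset.add_sum_erase _ _ h0mem, qc_zero, one_mul, Multiset.sub_zero] at this
      have := this
      linarith [this]
    exact mul_left_cancel₀ (by exact_mod_cast hl.ne') key


lemma fiber_card {k : ℕ} (s : Fin k → ℕ) (v : ℕ) :
    Fintype.card {i // s i = v} = (Finset.univ.val.map s).count v := by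
  rw [Fintype.card_subtype, Multiset.count_map, Finset.card_def, Finset.filter_val]
  exact congrArg Multiset.card (Multiset.filter_congr fun x _ => eq_comm)

lemma card_matching {k : ℕ} (s t : Fin k → ℕ)
    (h : Finset.univ.val.map s = Finset.univ.val.map t) :
    ((Finset.univ : Finset (Equiv.Perm (Fin k))).filter
        (fun σ => ∀ i, s (σ i) = t i)).card
      = multFact (Finset.univ.val.map t) := by
  have hcards : ∀ v, Fintype.card {i // t i = v} = Fintype.card {i // s i = v} := by
    intro v
    rw [fiber_card, fiber_card, h]
  have e : ∀ v, {i // t i = v} ≃ {i // s i = v} := fun v =>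
    Fintype.equivOfCardEq (hcards v)
  set σ₀ : Equiv.Perm (Fin k) :=
    ((Equiv.sigmaFiberEquiv t).symm.trans (Equiv.sigmaCongrRight e)).trans
      (Equiv.sigmaFiberEquiv s) with hσ₀
  have hbase : ∀ i, s (σ₀ i) = t i := by
    intro i
    simp only [hσ₀, Equiv.trans_apply, Equiv.sigmaCongrRight_apply]
    exact (e (t i) ⟨i, rfl⟩).prop
  have hbij : ((Finset.univ : Finset (Equiv.Perm (Fin k))).filter
        (fun σ => ∀ i, s (σ i) = t i)).card
      = ((Finset.univ : Finset (Equiv.Perm (Fin k))).filter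
        (fun σ => ∀ i, t (σ i) = t i)).card := by
    refine Finset.card_nbij' (fun σ => σ.trans σ₀.symm) (fun σ => σ.trans σ₀)
      ?_ ?_ ?_ ?_
    · intro σ hσ
      rw [Finset.mem_coe, Finset.mem_filter] at hσ ⊢
      refine ⟨Finset.mem_univ _, fun i => ?_⟩
      simp only [Equiv.trans_apply]
      rw [← hbase (σ₀.symm (σ i)), Equiv.apply_symm_apply, hσ.2 i]
    · intro σ hσ
      rw [Finset.mem_coe, Finset.mem_filter] at hσ ⊢
      refine ⟨Finset.mem_univ _, fun i => ?_⟩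
      simp only [Equiv.trans_apply]
      rw [hbase (σ i), hσ.2 i]
    · intro σ _
      ext i
      simp
    · intro σ _
      ext i
      simp
  rw [hbij]
  have hsc : ((Finset.univ : Finset (Equiv.Perm (Fin k))).filter
        (fun σ => ∀ i, t (σ i) = t i)).card
      = Fintype.card {g : Equiv.Perm (Fin k) // t ∘ ⇑g = t} := by
    rw [Fintype.card_subtype]
    congr 1
    apply Finset.filter_congr
    intro σ _
    constructor
    · intro hh
      funext i
      exact hh i
    · intro hh i
      exact congrFun hh i
  rw [hsc, DomMulAct.stabilizer_card' t, multFact]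
  have himg : Finset.univ.image t = (Finset.univ.val.map t).toFinset := by
    ext v
    simp only [Finset.mem_image, Multiset.mem_toFinset, Multiset.mem_map]
    constructor
    · rintro ⟨i, _, rfl⟩; exact ⟨i, Finset.mem_univ_val _ , rfl⟩
    · rintro ⟨i, _, rfl⟩; exact ⟨i, Finset.mem_univ _, rfl⟩
  rw [himg]
  refine Finset.prod_congr rfl fun v _ => ?_
  rw [fiber_card]


lemma sum_finsum {ι : Type*} (s : Finset ι) (f : ι → Multiset ℕ) :
    (∑ i ∈ s, f i).sum = ∑ i ∈ s, (f i).sum := by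
  classical
  induction s using Finset.induction with
  | empty => simp
  | insert _ _ h ih => rw [Finset.sum_insert h, Finset.sum_insert h, Multiset.sum_add, ih]

lemma tup_card_le {k : ℕ} {μ : Multiset ℕ} {g : Fin k → Multiset ℕ}
    (hg : g ∈ tup k μ) : k ≤ Multiset.card μ := by
  obtain ⟨hsum, hne⟩ := mem_tup.1 hg
  have hcm : Multiset.card μ = ∑ i, Multiset.card (g i) := by
    rw [← hsum, card_finsum]
  have hk : (k : ℕ) ≤ ∑ i : Fin k, Multiset.card (g i) := by
    calc (k : ℕ) = ∑ _i : Fin k, 1 := by simp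
      _ ≤ _ := Finset.sum_le_sum fun i _ => Multiset.card_pos.2 (hne i)
  omega

lemma map_univ_equiv' {α β : Type*} [Fintype α] [Fintype β] {γ : Type*}
    (F : β → γ) (e : α ≃ β) :
    Finset.univ.val.map (fun i => F (e i)) = Finset.univ.val.map F := by
  have h1 : Multiset.map (⇑e) Finset.univ.val = Finset.univ.val := by
    calc Multiset.map (⇑e) Finset.univ.val
        = (Finset.univ.map e.toEmbedding).val := rfl
      _ = Finset.univ.val := by rw [Finset.map_univ_equiv]
  calc Finset.univ.val.map (fun i => F (e i))
      = (Multiset.map (⇑e) Finset.univ.val).map F := by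
        rw [Multiset.map_map]; rfl
    _ = Finset.univ.val.map F := by rw [h1]

lemma mem_puzzles {μ : Multiset ℕ} {L : List ℕ} {g : Fin L.length → Multiset ℕ} :
    g ∈ puzzles μ L ↔ (∑ i, g i) = μ ∧ ∀ i, (g i).sum = L.get i := by
  rw [puzzles, Finset.mem_filter, and_iff_right_iff_imp]
  rintro ⟨hsum, -⟩
  rw [Fintype.mem_piFinset]
  intro i
  rw [Multiset.mem_toFinset, Multiset.mem_powerset, ← hsum]
  exact Finset.single_le_sum (f := g) (fun j _ => Multiset.zero_le _) (Finset.mem_univ i)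

lemma map_univ_get (L : List ℕ) :
    Finset.univ.val.map (fun i => L.get i) = (L : Multiset ℕ) := by
  rw [Fin.univ_val_map]
  exact congrArg _ (List.ofFn_get L)

/-- The tuples in `tup` with prescribed multiset of block sums. -/
def AA (μ : Multiset ℕ) (m : Multiset ℕ) : Finset (Fin m.toList.length → Multiset ℕ) :=
  (tup m.toList.length μ).filter
    (fun g => Finset.univ.val.map (fun i => (g i).sum) = m)

lemma claim1' (μ : Multiset ℕ) (m : Multiset ℕ) (hm : ∀ {i : ℕ}, i ∈ m → 0 < i) :
    (1 / (multFact m : ℚ)) * ∑ g ∈ puzzles μ m.toList, ∏ i, qw (g i)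
      = (1 / ((m.toList.length).factorial : ℚ)) * ∑ g ∈ AA μ m, ∏ i, qw (g i) := by
  classical
  set L := m.toList with hLdef
  have hL : (L : Multiset ℕ) = m := Multiset.coe_toList _
  have hget_mem : ∀ i : Fin L.length, L.get i ∈ m := by
    intro i
    rw [← hL]
    exact Multiset.mem_coe.2 (L.get_mem i)
  have hget_pos : ∀ i : Fin L.length, 0 < L.get i := fun i => hm (hget_mem i)
  have hBtup : ∀ g ∈ puzzles μ L, g ∈ tup L.length μ := by
    intro g hg
    obtain ⟨h1, h2⟩ := mem_puzzles.1 hg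
    refine mem_tup.2 ⟨h1, fun i hi => ?_⟩
    have h3 := h2 i
    rw [hi] at h3
    simp only [Multiset.sum_zero] at h3
    have h4 := hget_pos i
    omega
  have hBsums : ∀ g ∈ puzzles μ L,
      Finset.univ.val.map (fun i => (g i).sum) = m := by
    intro g hg
    have h2 := (mem_puzzles.1 hg).2
    have heq : Finset.univ.val.map (fun i => (g i).sum)
        = Finset.univ.val.map (fun i : Fin L.length => L.get i) :=
      Multiset.map_congr rfl (fun i _ => h2 i)
    rw [heq, map_univ_get, hL]
  have count0 : ∀ g ∈ AA μ m,
      ((Finset.univ : Finset (Equiv.Perm (Fin L.length))).filter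
        (fun σ : Equiv.Perm (Fin L.length) => g ∘ ⇑σ ∈ puzzles μ L)).card = multFact m := by
    intro g hg
    obtain ⟨hgtup, hgsums⟩ := Finset.mem_filter.1 hg
    have hgsum : (∑ i, g i) = μ := (mem_tup.1 hgtup).1
    have hfilter : (Finset.univ : Finset (Equiv.Perm (Fin L.length))).filter
          (fun σ : Equiv.Perm (Fin L.length) => g ∘ ⇑σ ∈ puzzles μ L)
        = (Finset.univ : Finset (Equiv.Perm (Fin L.length))).filter
          (fun σ => ∀ i, (g (σ i)).sum = L.get i) := by
      apply Finset.filter_congr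
      intro σ _
      rw [mem_puzzles]
      constructor
      · exact fun h => h.2
      · intro h
        refine ⟨?_, h⟩
        rw [← hgsum]
        exact Equiv.sum_comp σ g
    rw [hfilter]
    have hmt : Finset.univ.val.map (fun i : Fin L.length => L.get i) = m := by
      rw [map_univ_get, hL]
    have hcm := card_matching (fun i => (g i).sum) (fun i : Fin L.length => L.get i)
      (by rw [hgsums, hmt])
    rw [hcm, hmt]
  have claim0 : (((L.length).factorial : ℚ)) * (∑ h ∈ puzzles μ L, ∏ i, qw (h i))
      = (multFact m : ℚ) * ∑ g ∈ AA μ m, ∏ i, qw (g i) := by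
    have hstep : ∑ p ∈ ((AA μ m ×ˢ (Finset.univ : Finset (Equiv.Perm (Fin L.length)))).filter
          (fun p : (Fin L.length → Multiset ℕ) × Equiv.Perm (Fin L.length) => p.1 ∘ ⇑p.2 ∈ puzzles μ L)), (∏ i, qw (p.1 i))
        = ∑ q ∈ puzzles μ L ×ˢ (Finset.univ : Finset (Equiv.Perm (Fin L.length))),
            ∏ i, qw (q.1 i) := by
      refine Finset.sum_nbij' (fun p => (p.1 ∘ ⇑p.2, p.2))
        (fun q => (q.1 ∘ ⇑(q.2⁻¹), q.2)) ?_ ?_ ?_ ?_ ?_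
      · intro p hp
        obtain ⟨hp1, hp2⟩ := Finset.mem_filter.1 hp
        exact Finset.mem_product.2 ⟨hp2, Finset.mem_univ _⟩
      · intro q hq
        obtain ⟨hq1, -⟩ := Finset.mem_product.1 hq
        rw [Finset.mem_filter]
        constructor
        · rw [Finset.mem_product]
          refine ⟨?_, Finset.mem_univ _⟩
          rw [AA, Finset.mem_filter]
          refine ⟨tup_comp_perm (q.2⁻¹ : Equiv.Perm (Fin L.length)) (hBtup q.1 hq1), ?_⟩
          calc Finset.univ.val.map (fun i => ((q.1 ∘ ⇑(q.2⁻¹)) i).sum)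
              = Finset.univ.val.map (fun i => (q.1 i).sum) :=
                map_univ_equiv' (fun i => (q.1 i).sum) (q.2⁻¹ : Equiv.Perm (Fin L.length))
            _ = m := hBsums q.1 hq1
        · have hcomp : (q.1 ∘ ⇑(q.2⁻¹)) ∘ ⇑q.2 = q.1 := by
            funext x
            simp
          dsimp only
          rw [hcomp]
          exact hq1
      · intro p _
        dsimp only
        refine Prod.ext ?_ rfl
        dsimp only
        funext x
        simp
      · intro q _
        dsimp only
        refine Prod.ext ?_ rfl
        dsimp only
        funext x
        simp
      · intro p _
        exact (Equiv.prod_comp p.2 (fun i => qw (p.1 i))).symm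
    have lhs_eval : ∑ p ∈ ((AA μ m ×ˢ (Finset.univ : Finset (Equiv.Perm (Fin L.length)))).filter
          (fun p : (Fin L.length → Multiset ℕ) × Equiv.Perm (Fin L.length) => p.1 ∘ ⇑p.2 ∈ puzzles μ L)), (∏ i, qw (p.1 i))
        = (multFact m : ℚ) * ∑ g ∈ AA μ m, ∏ i, qw (g i) := by
      rw [Finset.sum_filter, Finset.sum_product, Finset.mul_sum]
      refine Finset.sum_congr rfl fun g hg => ?_
      dsimp only
      calc ∑ σ ∈ (Finset.univ : Finset (Equiv.Perm (Fin L.length))),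
            (if g ∘ ⇑σ ∈ puzzles μ L then ∏ i, qw (g i) else 0)
          = ∑ σ ∈ (Finset.univ : Finset (Equiv.Perm (Fin L.length))).filter
              (fun σ : Equiv.Perm (Fin L.length) => g ∘ ⇑σ ∈ puzzles μ L), ∏ i, qw (g i) := (Finset.sum_filter _ _).symm
        _ = (((Finset.univ : Finset (Equiv.Perm (Fin L.length))).filter
              (fun σ : Equiv.Perm (Fin L.length) => g ∘ ⇑σ ∈ puzzles μ L)).card : ℚ) * ∏ i, qw (g i) := by
            rw [Finset.sum_const, nsmul_eq_mul]
        _ = (multFact m : ℚ) * ∏ i, qw (g i) := by rw [count0 g hg]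
    have rhs_eval : ∑ q ∈ puzzles μ L ×ˢ (Finset.univ : Finset (Equiv.Perm (Fin L.length))),
          (∏ i, qw (q.1 i))
        = (((L.length).factorial : ℚ)) * ∑ h ∈ puzzles μ L, ∏ i, qw (h i) := by
      rw [Finset.sum_product, Finset.mul_sum]
      refine Finset.sum_congr rfl fun h _ => ?_
      dsimp only
      rw [Finset.sum_const, nsmul_eq_mul, Finset.card_univ, Fintype.card_perm,
        Fintype.card_fin]
    rw [← lhs_eval, ← rhs_eval, hstep]
  have hmne := multFact_ne_zero m
  have hkne : (((L.length).factorial : ℚ)) ≠ 0 := by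
    exact_mod_cast (Nat.factorial_pos L.length).ne'
  rw [one_div_mul_eq_div, one_div_mul_eq_div, div_eq_div_iff hmne hkne]
  linear_combination claim0


end Aux

open Aux in
/-- `∑_{λ⊢n} (1/∏ n_i(λ)!) ∑_{puzzles μ→λ} ∏_i (l(μ^i)-1)!/∏_j n_j(μ^i)!
  = l(μ)!/∏ n_i(μ)!`. -/
theorem stmt17 (n : ℕ) (mu : Nat.Partition n) :
    ∑ lam : Nat.Partition n, (1 / (multFact lam.parts : ℚ)) *
        ∑ g ∈ puzzles mu.parts lam.parts.toList,
          ∏ i, (((g i).card - 1).factorial : ℚ) / (multFact (g i) : ℚ) =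
      (mu.parts.card.factorial : ℚ) / (multFact mu.parts : ℚ) := by
  classical
  set μ := mu.parts with hμdef
  have hrw1 : (∑ lam : Nat.Partition n, (1 / (multFact lam.parts : ℚ)) *
        ∑ g ∈ puzzles mu.parts lam.parts.toList,
          ∏ i, (((g i).card - 1).factorial : ℚ) / (multFact (g i) : ℚ))
      = ∑ lam : Nat.Partition n, (1 / (multFact lam.parts : ℚ)) *
        ∑ g ∈ puzzles μ lam.parts.toList, ∏ i, qw (g i) :=
    Finset.sum_congr rfl fun lam _ => by
      rw [Finset.sum_congr rfl fun g _ =>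
        Finset.prod_congr rfl fun i _ => (qw_def (g i)).symm]
  rw [hrw1]
  rw [Finset.sum_congr rfl fun lam _ => claim1' μ lam.parts (fun hi => lam.parts_pos hi)]
  -- step B : sigma bijection
  have stepB : (∑ lam : Nat.Partition n,
      (1 / ((lam.parts.toList.length).factorial : ℚ)) *
          ∑ g ∈ AA μ lam.parts, ∏ i, qw (g i)) = F μ := by
    rw [F]
    have lhs_sigma : (∑ lam : Nat.Partition n,
        (1 / ((lam.parts.toList.length).factorial : ℚ)) *
            ∑ g ∈ AA μ lam.parts, ∏ i, qw (g i))
        = ∑ p ∈ (Finset.univ : Finset (Nat.Partition n)).sigma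
            (fun lam => AA μ lam.parts),
            (1 / ((p.1.parts.toList.length).factorial : ℚ)) * ∏ i, qw (p.2 i) := by
      rw [Finset.sum_sigma]
      exact Finset.sum_congr rfl fun lam _ => by rw [Finset.mul_sum]
    have rhs_sigma : (∑ k ∈ Finset.range (Multiset.card μ + 1),
          (1 / (k.factorial : ℚ)) * T k μ)
        = ∑ p ∈ (Finset.range (Multiset.card μ + 1)).sigma (fun k => tup k μ),
            (1 / ((p.1).factorial : ℚ)) * ∏ i, qw (p.2 i) := by
      rw [Finset.sum_sigma]
      exact Finset.sum_congr rfl fun k _ => by rw [T, Finset.mul_sum]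
    rw [lhs_sigma, rhs_sigma]
    refine Finset.sum_bij (fun p _ => (⟨p.1.parts.toList.length, p.2⟩ :
        Σ k : ℕ, Fin k → Multiset ℕ)) ?_ ?_ ?_ ?_
    · -- maps to
      intro p hp
      rw [Finset.mem_sigma] at hp ⊢
      obtain ⟨-, hp2⟩ := hp
      obtain ⟨hptup, -⟩ := Finset.mem_filter.1 hp2
      exact ⟨Finset.mem_range.2 (Nat.lt_succ_of_le (tup_card_le hptup)), hptup⟩
    · -- injective
      intro p hp q hq heq
      obtain ⟨p1, p2⟩ := p
      obtain ⟨q1, q2⟩ := q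
      rw [Finset.mem_sigma] at hp hq
      dsimp only at hp hq heq
      have hpsums := (Finset.mem_filter.1 hp.2).2
      have hqsums := (Finset.mem_filter.1 hq.2).2
      have hparts : p1.parts = q1.parts := by
        have hc := congrArg
          (fun r : Σ k : ℕ, Fin k → Multiset ℕ =>
            Finset.univ.val.map (fun i => (r.2 i).sum)) heq
        dsimp only at hc
        rw [hpsums, hqsums] at hc
        exact hc
      have hfst : p1 = q1 := Nat.Partition.ext hparts
      subst hfst
      have h2 : p2 = q2 := eq_of_heq (Sigma.mk.inj_iff.1 heq).2
      rw [h2]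
    · -- surjective
      intro b hb
      obtain ⟨k, g⟩ := b
      rw [Finset.mem_sigma] at hb
      obtain ⟨hb1, hb2⟩ := hb
      dsimp only at hb1 hb2
      obtain ⟨hgsum, hgne⟩ := mem_tup.1 hb2
      have hpos : ∀ {v : ℕ}, v ∈ Finset.univ.val.map (fun i => (g i).sum) → 0 < v := by
        intro v hv
        obtain ⟨j, -, rfl⟩ := Multiset.mem_map.1 hv
        obtain ⟨x, hx⟩ := Multiset.exists_mem_of_ne_zero (hgne j)
        obtain ⟨m', hm'⟩ := Multiset.exists_cons_of_mem hx
        rw [hm', Multiset.sum_cons]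
        have hgj : g j ≤ μ := by
          rw [← hgsum]
          exact Finset.single_le_sum (f := g) (fun j _ => Multiset.zero_le _)
            (Finset.mem_univ j)
        have hxμ : x ∈ μ := Multiset.mem_of_le hgj hx
        have hpx := mu.parts_pos hxμ
        omega
      have hsum : (Finset.univ.val.map (fun i => (g i).sum)).sum = n := by
        have h1 : (Finset.univ.val.map (fun i => (g i).sum)).sum
            = ∑ i : Fin k, (g i).sum := rfl
        rw [h1, ← sum_finsum, hgsum]
        exact mu.parts_sum
      set lam : Nat.Partition n :=
        ⟨Finset.univ.val.map (fun i => (g i).sum), hpos, hsum⟩ with hlamdef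
      have hlen : lam.parts.toList.length = k := by
        rw [Multiset.length_toList]
        simp [hlamdef]
      refine ⟨⟨lam, fun i => g (Fin.cast hlen i)⟩, ?_, ?_⟩
      · rw [Finset.mem_sigma]
        refine ⟨Finset.mem_univ _, ?_⟩
        rw [AA, Finset.mem_filter]
        constructor
        · rw [mem_tup]
          refine ⟨?_, fun i => hgne _⟩
          rw [← hgsum]
          exact Fintype.sum_equiv (finCongr hlen) _ _ (fun i => rfl)
        · calc Finset.univ.val.map (fun i => (g (Fin.cast hlen i)).sum)
              = Finset.univ.val.map (fun i => (g i).sum) :=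
                map_univ_equiv' (fun i => (g i).sum) (finCongr hlen)
            _ = lam.parts := rfl
      · dsimp only
        refine Sigma.ext hlen ?_
        rw [Fin.heq_fun_iff hlen]
        intro i
        rfl
    · -- summand
      intro p hp
      rfl
  rw [stepB, F_eq_qc, qc_def]


end
end
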